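/- arXiv:1504.01014 — 10 statements merged into one kernel-verified Lean document; each statement's English description precedes it below -/
import Mathlib

section
/- Let G be a finite abelian group, let Ĝ denote its group of (additive) characters, and let F be the unitary Fourier transform defined by (Fx)(χ) := (1/√|G|)·Σ_{g∈G} x(g)·conj(χ(g)) for x : G → ℂ and χ ∈ Ĝ. Then for every nonzero function x : G → ℂ, one has ‖x‖₀ · ‖Fx‖₀ ≥ |G|. -/
open scoped BigOperators ComplexConjugate
open Finset Complex

/-- Number of nonzero entries ("0-norm"). -/
noncomputable def norm0 {N : Type*} (x : N → ℂ) : ℕ := Nat.card {i // x i ≠ 0}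

/-- The 1-norm. -/
noncomputable def norm1 {N : Type*} [Fintype N] (x : N → ℂ) : ℝ := ∑ i, ‖x i‖

/-- The squared 2-norm. -/
noncomputable def norm2sq {N : Type*} [Fintype N] (x : N → ℂ) : ℝ := ∑ i, ‖x i‖ ^ 2

/-- Numerical sparsity: `ns x = ‖x‖₁² / ‖x‖₂²`. -/
noncomputable def ns {N : Type*} [Fintype N] (x : N → ℂ) : ℝ := norm1 x ^ 2 / norm2sq x

/-- The unitary discrete Fourier transform on `ℂ^(ZMod n)`. -/
noncomputable def dft (n : ℕ) [NeZero n] (x : ZMod n → ℂ) : ZMod n → ℂ := fun k =>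
  (1 / Real.sqrt n : ℝ) *
    ∑ j : ZMod n, x j *
      Complex.exp (-(2 * (Real.pi : ℂ) * Complex.I * (j.val : ℂ) * (k.val : ℂ)) / (n : ℂ))
/-- Donoho–Stark / Tao multiplicative uncertainty principle for finite abelian groups:
for the unitary Fourier transform `F` on a finite abelian group `G` (with character group
`AddChar G ℂ`), every nonzero `x : G → ℂ` satisfies `‖x‖₀ · ‖Fx‖₀ ≥ |G|`. -/
theorem multiplicative_uncertainty_finite_abelian (G : Type*) [AddCommGroup G] [Fintype G]
    (x : G → ℂ) (hx : x ≠ 0) (Fx : AddChar G ℂ → ℂ)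
    (hFx : ∀ χ : AddChar G ℂ,
      Fx χ = (1 / Real.sqrt (Fintype.card G) : ℝ) * ∑ g, x g * (starRingEnd ℂ) (χ g)) :
    Fintype.card G ≤ norm0 x * norm0 Fx := by
  classical
  set n := Fintype.card G with hn
  have hnpos : (0:ℝ) < n := by exact_mod_cast (Fintype.card_pos : 0 < n)
  -- complex Plancherel
  have plancherelC : ∑ χ : AddChar G ℂ, Fx χ * conj (Fx χ) = ∑ g, x g * conj (x g) := by
    set c : ℂ := ((1 / Real.sqrt n : ℝ) : ℂ) with hc
    have hcc : c * conj c * n = 1 := by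
      rw [hc, Complex.conj_ofReal, ← Complex.ofReal_mul]
      rw [one_div, ← Real.sqrt_inv, Real.mul_self_sqrt (by positivity)]
      rw [← Complex.ofReal_natCast, ← Complex.ofReal_mul, ← Complex.ofReal_one]
      congr 1
      rw [inv_mul_cancel₀]
      exact_mod_cast Fintype.card_pos.ne'
    have hsum : ∀ g h : G, ∑ χ : AddChar G ℂ, conj (χ g) * χ h
        = if g = h then (n : ℂ) else 0 := by
      intro g h
      have e : ∀ χ : AddChar G ℂ, conj (χ g) * χ h = χ (h - g) := by
        intro χ
        rw [← AddChar.inv_apply_eq_conj, ← AddChar.map_neg_eq_inv, sub_eq_add_neg,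
          AddChar.map_add_eq_mul, mul_comm]
      simp_rw [e]
      rw [AddChar.sum_apply_eq_ite]
      simp [sub_eq_zero, eq_comm, hn]
    have h1 : ∀ χ : AddChar G ℂ, Fx χ * conj (Fx χ)
        = ∑ g, ∑ h, (c * conj c) * ((x g * conj (x h)) * (conj (χ g) * χ h)) := by
      intro χ
      rw [hFx, map_mul, map_sum]
      simp_rw [map_mul, Complex.conj_conj]
      rw [mul_mul_mul_comm, Finset.sum_mul_sum]
      simp_rw [Finset.mul_sum]
      exact Finset.sum_congr rfl fun g _ => Finset.sum_congr rfl fun h _ => by ring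
    calc ∑ χ : AddChar G ℂ, Fx χ * conj (Fx χ)
        = ∑ χ : AddChar G ℂ, ∑ g, ∑ h,
            (c * conj c) * ((x g * conj (x h)) * (conj (χ g) * χ h)) := by
          exact Finset.sum_congr rfl fun χ _ => h1 χ
      _ = ∑ g, ∑ h, (x g * conj (x h)) *
            ((c * conj c) * ∑ χ : AddChar G ℂ, conj (χ g) * χ h) := by
          rw [Finset.sum_comm]
          refine Finset.sum_congr rfl fun g _ => ?_
          rw [Finset.sum_comm]
          refine Finset.sum_congr rfl fun h _ => ?_
          rw [Finset.mul_sum, Finset.mul_sum]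
          exact Finset.sum_congr rfl fun χ _ => by ring
      _ = ∑ g, x g * conj (x g) := by
          simp_rw [hsum, mul_ite, mul_zero, Finset.sum_ite_eq, Finset.mem_univ, if_true]
          simp [hcc, mul_assoc]
  have plancherel : ∑ χ : AddChar G ℂ, ‖Fx χ‖ ^ 2 = ∑ g, ‖x g‖ ^ 2 := by
    have := plancherelC
    simp_rw [Complex.mul_conj] at this
    have h2 : ((∑ χ : AddChar G ℂ, Complex.normSq (Fx χ) : ℝ) : ℂ)
        = ((∑ g, Complex.normSq (x g) : ℝ) : ℂ) := by push_cast; exact this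
    have h3 := Complex.ofReal_injective h2
    simpa [Complex.sq_norm] using h3
  -- supports
  set S : Finset G := Finset.univ.filter (fun g => x g ≠ 0) with hS
  set T : Finset (AddChar G ℂ) := Finset.univ.filter (fun χ => Fx χ ≠ 0) with hT
  have hS0 : norm0 x = S.card := by
    rw [norm0, Nat.card_eq_fintype_card, Fintype.card_subtype]
  have hT0 : norm0 Fx = T.card := by
    rw [norm0, Nat.card_eq_fintype_card, Fintype.card_subtype]
  set E : ℝ := ∑ g, ‖x g‖ ^ 2 with hE
  have hEpos : 0 < E := by
    obtain ⟨g, hg⟩ : ∃ g, x g ≠ 0 := by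
      by_contra h
      push_neg at h
      exact hx (funext h)
    refine Finset.sum_pos' (fun i _ => by positivity) ⟨g, Finset.mem_univ g, pow_pos (norm_pos_iff.mpr hg) 2⟩
  -- ℓ¹ restricted to support
  have hsumS : ∑ g, ‖x g‖ = ∑ g ∈ S, ‖x g‖ := by
    rw [eq_comm]
    apply Finset.sum_subset (Finset.subset_univ S)
    intro g _ hg
    simp [hS] at hg
    simp [hg]
  -- pointwise bound
  have hpoint : ∀ χ : AddChar G ℂ,
      ‖Fx χ‖ ^ 2 ≤ (1 / n) * (∑ g ∈ S, ‖x g‖) ^ 2 := by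
    intro χ
    have habs : ‖Fx χ‖ ≤ (1 / Real.sqrt n) * ∑ g, ‖x g‖ := by
      rw [hFx]
      rw [norm_mul]
      have h1 : ‖((1 / Real.sqrt n : ℝ) : ℂ)‖ = 1 / Real.sqrt n := by
        simp [Complex.norm_real, Real.norm_eq_abs, _root_.abs_of_nonneg, Real.sqrt_nonneg]
      rw [h1]
      gcongr
      calc ‖∑ g, x g * conj (χ g)‖ ≤ ∑ g, ‖x g * conj (χ g)‖ :=
            norm_sum_le _ _
        _ = ∑ g, ‖x g‖ := by
            refine Finset.sum_congr rfl fun g _ => ?_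
            rw [norm_mul]
            have : ‖conj (χ g)‖ = 1 := by
              rw [Complex.norm_conj]
              exact χ.norm_apply g
            rw [this, mul_one]
    have h2 : ‖Fx χ‖ ^ 2 ≤ ((1 / Real.sqrt n) * ∑ g, ‖x g‖) ^ 2 :=
      pow_le_pow_left₀ (norm_nonneg _) habs 2
    refine h2.trans_eq ?_
    rw [mul_pow, hsumS]
    congr 1
    rw [div_pow, one_pow, Real.sq_sqrt hnpos.le]
  -- Cauchy–Schwarz on support
  have hCS : (∑ g ∈ S, ‖x g‖) ^ 2 ≤ S.card * E := by
    refine (sq_sum_le_card_mul_sum_sq).trans ?_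
    gcongr
    rw [hE]
    apply Finset.sum_le_sum_of_subset_of_nonneg (Finset.subset_univ S)
    intro g _ _
    positivity
  -- sum over support of Fx
  have hTsum : ∑ χ : AddChar G ℂ, ‖Fx χ‖ ^ 2 = ∑ χ ∈ T, ‖Fx χ‖ ^ 2 := by
    rw [eq_comm]
    apply Finset.sum_subset (Finset.subset_univ T)
    intro χ _ hχ
    simp [hT] at hχ
    simp [hχ]
  have main : E ≤ T.card * ((1 / n) * (S.card * E)) := by
    calc E = ∑ χ ∈ T, ‖Fx χ‖ ^ 2 := by rw [← plancherel, hTsum]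
      _ ≤ ∑ χ ∈ T, (1 / n) * (∑ g ∈ S, ‖x g‖) ^ 2 :=
          Finset.sum_le_sum fun χ _ => hpoint χ
      _ = T.card * ((1 / n) * (∑ g ∈ S, ‖x g‖) ^ 2) := by
          rw [Finset.sum_const, nsmul_eq_mul]
      _ ≤ T.card * ((1 / n) * (S.card * E)) := by gcongr
  have final : (n : ℝ) ≤ (S.card : ℝ) * T.card := by
    have h2 : E * n ≤ (T.card : ℝ) * (S.card * E) := by
      have h3 := mul_le_mul_of_nonneg_right main hnpos.le
      calc E * n ≤ (T.card : ℝ) * (1 / n * (S.card * E)) * n := h3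
        _ = (T.card : ℝ) * (S.card * E) := by field_simp
    nlinarith [h2, hEpos]
  rw [hS0, hT0]
  exact_mod_cast final
end

section
/- Let p be a prime number and let F : ℂ^(ZMod p) → ℂ^(ZMod p) be the unitary discrete Fourier transform. Then for every nonzero x ∈ ℂ^(ZMod p), one has ‖x‖₀ + ‖Fx‖₀ ≥ p + 1. -/
open scoped BigOperators

namespace TaoUncertaintyAux

open Polynomial

set_option linter.unusedSectionVars false


lemma sparse_lemma (p : ℕ) [hp : Fact p.Prime] :
    ∀ m : ℕ, ∀ (g : (ZMod p)[X]) (k : ℕ), k + g.natDegree ≤ m →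
      g ≠ 0 → g.natDegree < p → (X - 1 : (ZMod p)[X]) ^ k ∣ g → k < g.support.card := by
  intro m
  induction m using Nat.strong_induction_on with
  | _ m IH =>
    intro g k hm hg hdeg hdvd
    match k with
    | 0 => simpa using Finset.card_pos.2 (Polynomial.support_nonempty.2 hg)
    | (k'+1) =>
      by_cases h0 : g.coeff 0 = 0
      · -- X divides g
        obtain ⟨g₁, rfl⟩ := Polynomial.X_dvd_iff.2 h0
        have hg₁ : g₁ ≠ 0 := by rintro rfl; simp at hg
        have hXne : (X : (ZMod p)[X]) ≠ 0 := Polynomial.X_ne_zero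
        have hdegeq : (X * g₁).natDegree = g₁.natDegree + 1 := by
          rw [Polynomial.natDegree_mul hXne hg₁, Polynomial.natDegree_X]; omega
        have hco : IsCoprime (X - 1 : (ZMod p)[X]) X := ⟨-1, 1, by ring⟩
        have hdvd₁ : (X - 1 : (ZMod p)[X]) ^ (k' + 1) ∣ g₁ :=
          (hco.pow_left).dvd_of_dvd_mul_left hdvd
        have hsupp : (X * g₁).support = g₁.support.map ⟨Nat.succ, Nat.succ_injective⟩ := by
          ext e
          cases e with
          | zero => simp [Polynomial.mem_support_iff, Polynomial.mul_coeff_zero]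
          | succ e => simp [Polynomial.mem_support_iff, Polynomial.coeff_X_mul]
        have hcard : (X * g₁).support.card = g₁.support.card := by
          rw [hsupp, Finset.card_map]
        rw [hcard]
        exact IH (k' + 1 + g₁.natDegree) (by omega) g₁ (k' + 1) le_rfl hg₁ (by omega) hdvd₁
      · by_cases hd0 : g.natDegree = 0
        · -- constant
          obtain ⟨c, rfl⟩ := Polynomial.natDegree_eq_zero.1 hd0
          have hc : c ≠ 0 := by simpa using h0
          exfalso
          obtain ⟨u, hu⟩ := (dvd_pow_self (X - 1 : (ZMod p)[X]) (Nat.succ_ne_zero k')).trans hdvd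
          have := congrArg (Polynomial.eval 1) hu
          simp at this
          exact hc this
        · -- derivative step
          set g' := Polynomial.derivative g with hg'def
          obtain ⟨u, hu⟩ := hdvd
          have hder : (X - 1 : (ZMod p)[X]) ^ k' ∣ g' := by
            refine ⟨((k' + 1 : ℕ) : (ZMod p)[X]) * u + (X - 1) * Polynomial.derivative u, ?_⟩
            rw [hg'def, hu]
            rw [Polynomial.derivative_mul, Polynomial.derivative_pow]
            simp only [Polynomial.derivative_sub, Polynomial.derivative_X,
              Polynomial.derivative_one, sub_zero, mul_one, Nat.add_sub_cancel]
            rw [Polynomial.C_eq_natCast]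
            push_cast
            ring
          set h : (ZMod p)[X] := X * g' with hh
          have hdvdh : (X - 1 : (ZMod p)[X]) ^ k' ∣ h := hder.mul_left X
          have hsupph : h.support = g.support.erase 0 := by
            ext e
            cases e with
            | zero => simp [hh, Polynomial.mem_support_iff, Polynomial.mul_coeff_zero]
            | succ e =>
              simp only [hh, Polynomial.mem_support_iff, Polynomial.coeff_X_mul,
                Polynomial.coeff_derivative, Finset.mem_erase, Ne, Nat.succ_ne_zero,
                not_false_iff, true_and, hg'def]
              constructor
              · intro hne
                exact fun hc => hne (by rw [hc]; ring)
              · intro hne hmul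
                have he : e + 1 ≤ g.natDegree := Polynomial.le_natDegree_of_ne_zero hne
                have hcast : ((e : ZMod p) + 1) ≠ 0 := by
                  have : ((e + 1 : ℕ) : ZMod p) ≠ 0 := by
                    rw [Ne, ZMod.natCast_eq_zero_iff]
                    exact Nat.not_dvd_of_pos_of_lt (Nat.succ_pos e) (by omega)
                  simpa using this
                exact hne (by
                  rcases mul_eq_zero.1 hmul with h1 | h2
                  · exact h1
                  · exact absurd h2 hcast)
          have h0mem : 0 ∈ g.support := Polynomial.mem_support_iff.2 h0
          have hcard : h.support.card = g.support.card - 1 := by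
            rw [hsupph, Finset.card_erase_of_mem h0mem]
          have hdmem : g.natDegree ∈ g.support := Polynomial.natDegree_mem_support_of_nonzero hg
          have hne0 : h ≠ 0 := by
            have : g.natDegree ∈ h.support := by
              rw [hsupph]; exact Finset.mem_erase.2 ⟨hd0, hdmem⟩
            exact fun hz => by simp [hz] at this
          have hg'ne : g' ≠ 0 := by
            intro hz; rw [hh, hz, mul_zero] at hne0; exact hne0 rfl
          have hdegh : h.natDegree ≤ g.natDegree := by
            rw [hh, Polynomial.natDegree_mul Polynomial.X_ne_zero hg'ne, Polynomial.natDegree_X]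
            have hlt' := Polynomial.natDegree_derivative_lt hd0
            rw [← hg'def] at hlt'
            omega
          have hlt : k' < h.support.card :=
            IH (k' + h.natDegree) (by omega) h k' le_rfl hne0 (by omega) hdvdh
          have hpos : 0 < g.support.card := Finset.card_pos.2 ⟨0, h0mem⟩
          omega


variable (p : ℕ) [hp : Fact p.Prime]

local notation "T" => AdjoinRoot (cyclotomic p ℤ)

noncomputable def tt : AdjoinRoot (cyclotomic p ℤ) := AdjoinRoot.root _

lemma cyclo_prime : Prime (cyclotomic p ℤ) :=
  (UniqueFactorizationMonoid.irreducible_iff_prime).1 (cyclotomic.irreducible hp.out.pos)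

lemma Tdomain : IsDomain T := AdjoinRoot.isDomain_of_prime (cyclo_prime p)

lemma Tnoeth : IsNoetherianRing T := by
  unfold AdjoinRoot
  exact Ideal.Quotient.isNoetherianRing _

/-- evaluation T → ZMod p sending `t ↦ 1`. -/
noncomputable def ev1 : T →+* ZMod p :=
  AdjoinRoot.lift (Int.castRingHom (ZMod p)) 1 (by
    rw [Polynomial.eval₂_at_one]
    rw [Polynomial.eval_one_cyclotomic_prime]
    simp)

lemma ev1_mk (g : ℤ[X]) : ev1 p (AdjoinRoot.mk _ g) = ((g.eval 1 : ℤ) : ZMod p) := by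
  rw [ev1, AdjoinRoot.lift_mk, Polynomial.eval₂_at_one]; rfl

lemma ev1_tt : ev1 p (tt p) = 1 := by
  rw [ev1, tt, AdjoinRoot.lift_root]

/-- p is divisible by t - 1 in T -/
lemma dvd_p : (tt p - 1) ∣ ((p : ℤ) : T) := by
  obtain ⟨q, hq⟩ := Polynomial.X_sub_C_dvd_sub_C_eval (a := (1 : ℤ)) (p := cyclotomic p ℤ)
  have h := congrArg (AdjoinRoot.mk (cyclotomic p ℤ)) hq
  rw [Polynomial.eval_one_cyclotomic_prime] at h
  simp only [map_sub, map_mul, AdjoinRoot.mk_self, map_intCast, zero_sub] at h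
  refine ⟨-(AdjoinRoot.mk _ q), ?_⟩
  have hX : AdjoinRoot.mk (cyclotomic p ℤ) (X - Polynomial.C 1) = tt p - 1 := by
    rw [map_sub, tt, AdjoinRoot.root]
    norm_num
  rw [← hX, map_sub] at *
  have hp' : ((p:ℤ) : T) = AdjoinRoot.mk (cyclotomic p ℤ) (Polynomial.C (p : ℤ)) := by
    simp
  rw [hp', ← neg_neg ((AdjoinRoot.mk (cyclotomic p ℤ)) (Polynomial.C (p:ℤ))), h]
  ring

/-- If ev1 z = 0 then (t-1) ∣ z. -/
lemma dvd_of_ev1_eq_zero (z : AdjoinRoot (cyclotomic p ℤ)) (hz : ev1 p z = 0) :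
    (tt p - 1) ∣ z := by
  obtain ⟨g, rfl⟩ := AdjoinRoot.mk_surjective z
  rw [ev1_mk] at hz
  obtain ⟨m, hm⟩ := (ZMod.intCast_zmod_eq_zero_iff_dvd _ _).1 hz
  obtain ⟨q, hq⟩ := Polynomial.X_sub_C_dvd_sub_C_eval (a := (1 : ℤ)) (p := g)
  have h := congrArg (AdjoinRoot.mk (cyclotomic p ℤ)) hq
  simp only [map_sub, map_mul] at h
  have hX : AdjoinRoot.mk (cyclotomic p ℤ) X - AdjoinRoot.mk (cyclotomic p ℤ) (Polynomial.C 1) = tt p - 1 := by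
    rw [tt, AdjoinRoot.root]; norm_num
  rw [hX] at h
  have hC : AdjoinRoot.mk (cyclotomic p ℤ) (Polynomial.C (g.eval 1)) = ((g.eval 1 : ℤ) : T) := by
    simp
  rw [hC] at h
  obtain ⟨w, hw⟩ := dvd_p p
  refine ⟨AdjoinRoot.mk _ q + (m : T) * w, ?_⟩
  have : ((g.eval 1 : ℤ) : T) = ((p : ℤ) : T) * (m : T) := by
    rw [hm]; push_cast; ring
  rw [mul_add]
  rw [← h, this, hw]
  push_cast
  ring

lemma ev1_sub_one : ev1 p (tt p - 1) = 0 := by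
  rw [map_sub, ev1_tt, map_one, sub_self]

lemma not_dvd_of_ev1_ne_zero (z : AdjoinRoot (cyclotomic p ℤ)) (hz : ev1 p z ≠ 0) :
    ¬ (tt p - 1) ∣ z := by
  rintro ⟨w, rfl⟩
  rw [map_mul, ev1_sub_one, zero_mul] at hz
  exact hz rfl

lemma not_unit_sub_one : ¬ IsUnit (tt p - 1) := by
  intro h
  have := (ev1_sub_one p) ▸ (h.map (ev1 p))
  exact not_isUnit_zero this

/-- Krull intersection: extraction of finite (t-1)-valuation. -/
lemma exists_not_dvd (z : AdjoinRoot (cyclotomic p ℤ)) (hz : z ≠ 0) :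
    ∃ k, ¬ (tt p - 1) ^ k ∣ z := by
  haveI := Tdomain p
  haveI := Tnoeth p
  by_contra hcon
  push_neg at hcon
  have hmem : z ∈ ⨅ k : ℕ, (Ideal.span {tt p - 1}) ^ k := by
    rw [Ideal.mem_iInf]
    intro k
    rw [Ideal.span_singleton_pow, Ideal.mem_span_singleton]
    exact hcon k
  rw [Ideal.iInf_pow_eq_bot_of_isDomain _ (by
      rw [Ne, Ideal.span_singleton_eq_top]
      exact not_unit_sub_one p)] at hmem
  exact hz hmem

variable {ζ : ℂ} (hζ : IsPrimitiveRoot ζ p)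

/-- evaluation T → ℂ sending t ↦ ζ. -/
noncomputable def evC (hζ : IsPrimitiveRoot ζ p) : AdjoinRoot (cyclotomic p ℤ) →+* ℂ :=
  AdjoinRoot.lift (Int.castRingHom ℂ) ζ (by
    rw [Polynomial.eval₂_eq_eval_map, Polynomial.map_cyclotomic_int]
    exact hζ.isRoot_cyclotomic hp.out.pos)

lemma evC_tt : evC p hζ (tt p) = ζ := by rw [evC, tt, AdjoinRoot.lift_root]

lemma evC_injective : Function.Injective (evC p hζ) := by
  rw [injective_iff_map_eq_zero]
  intro z hz
  obtain ⟨g, rfl⟩ := AdjoinRoot.mk_surjective z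
  rw [evC, AdjoinRoot.lift_mk] at hz
  have hint : IsIntegral ℤ ζ := hζ.isIntegral hp.out.pos
  have haev : Polynomial.aeval ζ g = 0 := by
    rw [Polynomial.aeval_def]
    rw [show (algebraMap ℤ ℂ) = Int.castRingHom ℂ from rfl]
    exact hz
  have hdvd : minpoly ℤ ζ ∣ g := minpoly.isIntegrallyClosed_dvd hint haev
  rw [← Polynomial.cyclotomic_eq_minpoly hζ hp.out.pos] at hdvd
  exact AdjoinRoot.mk_eq_zero.2 hdvd

lemma tt_sub_one_ne_zero (hζ : IsPrimitiveRoot ζ p) : tt p - 1 ≠ 0 := by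
  intro h
  have := congrArg (evC p hζ) h
  rw [map_sub, map_one, evC_tt, map_zero, sub_eq_zero] at this
  exact hζ.ne_one hp.out.one_lt this

set_option maxHeartbeats 1000000 in
/-- Chebotarëv-type theorem: minors of the DFT matrix at a primitive p-th root are invertible. -/
lemma cheb_det_ne_zero
    (sparse : ∀ (g : (ZMod p)[X]) (k : ℕ),
      g ≠ 0 → g.natDegree < p → (X - 1 : (ZMod p)[X]) ^ k ∣ g → k < g.support.card)
    (hζ : IsPrimitiveRoot ζ p) (n : ℕ) (a b : Fin n → ℕ)
    (ha : Function.Injective a) (hap : ∀ i, a i < p)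
    (hb : Function.Injective b) (hbp : ∀ i, b i < p) :
    (Matrix.of fun i j : Fin n => ζ ^ (b i * a j)).det ≠ 0 := by
  classical
  haveI := Tdomain p
  intro hdet0
  set MT : Matrix (Fin n) (Fin n) (AdjoinRoot (cyclotomic p ℤ)) :=
    Matrix.of fun i j => (tt p) ^ (b i * a j) with hMT
  have hmap : MT.map (evC p hζ) = Matrix.of fun i j : Fin n => ζ ^ (b i * a j) := by
    ext i j
    simp only [hMT, Matrix.map_apply, Matrix.of_apply, map_pow, evC_tt]
  have hdetT : MT.det = 0 := by
    apply evC_injective p hζ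
    rw [map_zero, RingHom.map_det, RingHom.mapMatrix_apply, hmap, hdet0]
  obtain ⟨v, hv0, hv⟩ := (Matrix.exists_mulVec_eq_zero_iff.2 hdetT)
  -- extract minimal (t-1)-valuation
  have hex : ∃ k, ¬ ∀ j, (tt p - 1) ^ k ∣ v j := by
    obtain ⟨j0, hj0⟩ := Function.ne_iff.1 hv0
    obtain ⟨k, hk⟩ := exists_not_dvd p (v j0) hj0
    exact ⟨k, fun h => hk (h j0)⟩
  set k := Nat.find hex with hkdef
  have hkspec : ¬ ∀ j, (tt p - 1) ^ k ∣ v j := Nat.find_spec hex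
  have hkpos : k ≠ 0 := by
    intro h
    apply hkspec
    intro j
    rw [h, pow_zero]
    exact one_dvd _
  have hkm : ∀ j, (tt p - 1) ^ (k - 1) ∣ v j := by
    have := Nat.find_min hex (m := k - 1) (by omega)
    push_neg at this
    exact this
  choose w hw using hkm
  -- relations for w
  have hrel : ∀ i : Fin n, ∑ j, (tt p) ^ (b i * a j) * w j = 0 := by
    intro i
    have hi := congrFun hv i
    rw [Matrix.mulVec, dotProduct] at hi
    simp only [hMT, Matrix.of_apply] at hi
    have hsum : ∑ j, (tt p) ^ (b i * a j) * v j = 0 := hi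
    have hfac : (tt p - 1) ^ (k-1) * ∑ j, (tt p) ^ (b i * a j) * w j = 0 := by
      rw [Finset.mul_sum, ← hsum]
      apply Finset.sum_congr rfl
      intro j _
      rw [hw j]; ring
    rcases mul_eq_zero.1 hfac with h | h
    · exact absurd h (pow_ne_zero _ (tt_sub_one_ne_zero p hζ))
    · exact h
  -- index with ev1(w) nonzero
  obtain ⟨j0, hj0⟩ : ∃ j0, ¬ (tt p - 1) ∣ w j0 := by
    by_contra hcon
    push_neg at hcon
    apply hkspec
    intro j
    obtain ⟨u, hu⟩ := hcon j
    refine ⟨u, ?_⟩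
    rw [hw j, hu, ← mul_assoc, ← pow_succ]
    congr 2
    omega
  have hc0 : ev1 p (w j0) ≠ 0 := fun h => hj0 (dvd_of_ev1_eq_zero p _ h)
  -- the polynomial f over T
  set f : Polynomial (AdjoinRoot (cyclotomic p ℤ)) :=
    ∑ j : Fin n, Polynomial.C (w j) * Polynomial.X ^ (a j) with hf
  have hcoeff : ∀ j : Fin n, f.coeff (a j) = w j := by
    intro j
    rw [hf, Polynomial.finset_sum_coeff]
    rw [Finset.sum_eq_single j]
    · simp
    · intro j' _ hj'
      rw [Polynomial.coeff_C_mul, Polynomial.coeff_X_pow, if_neg (fun h => hj' (ha h.symm)),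
        mul_zero]
    · simp
  have hfne : f ≠ 0 := by
    intro h
    apply hc0
    rw [← hcoeff j0, h, Polynomial.coeff_zero, map_zero]
  -- roots
  have hroot : ∀ i : Fin n, f.IsRoot ((tt p) ^ (b i)) := by
    intro i
    rw [Polynomial.IsRoot, hf, Polynomial.eval_finset_sum]
    rw [← hrel i]
    apply Finset.sum_congr rfl
    intro j _
    rw [Polynomial.eval_mul, Polynomial.eval_C, Polynomial.eval_pow, Polynomial.eval_X,
      ← pow_mul]
    exact mul_comm _ _
  have hrinj : Function.Injective (fun i : Fin n => (tt p) ^ (b i)) := by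
    intro i i' h
    have : ζ ^ (b i) = ζ ^ (b i') := by
      have := congrArg (evC p hζ) h
      simpa only [map_pow, evC_tt] using this
    exact hb (hζ.pow_inj (hbp i) (hbp i') this)
  -- multiset of roots divides f
  set S : Multiset (AdjoinRoot (cyclotomic p ℤ)) :=
    Multiset.map (fun i : Fin n => (tt p) ^ (b i)) Finset.univ.val with hS
  have hSle : S ≤ f.roots := by
    rw [Multiset.le_iff_count]
    intro r
    have hnodup : S.Nodup := Multiset.Nodup.map hrinj Finset.univ.nodup
    by_cases hr : r ∈ S
    · have h1 : S.count r = 1 := Multiset.count_eq_one_of_mem hnodup hr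
      rw [h1, Polynomial.count_roots]
      obtain ⟨i, _, rfl⟩ := Multiset.mem_map.1 hr
      exact (Polynomial.rootMultiplicity_pos hfne).2 (hroot i)
    · rw [Multiset.count_eq_zero_of_notMem hr]
      exact Nat.zero_le _
  have hdvdf : (S.map fun r => Polynomial.X - Polynomial.C r).prod ∣ f :=
    (Multiset.prod_X_sub_C_dvd_iff_le_roots hfne S).2 hSle
  -- map along ev1
  have hmapdvd : (((S.map fun r => Polynomial.X - Polynomial.C r).prod).map (ev1 p)) ∣
      f.map (ev1 p) := Polynomial.map_dvd _ hdvdf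
  have hprodmap : (((S.map fun r => Polynomial.X - Polynomial.C r).prod).map (ev1 p))
      = (Polynomial.X - 1 : (ZMod p)[X]) ^ n := by
    have h1 := map_multiset_prod (Polynomial.mapRingHom (ev1 p))
      (Multiset.map (fun r => Polynomial.X - Polynomial.C r) S)
    rw [Polynomial.coe_mapRingHom] at h1
    rw [h1, Multiset.map_map]
    have h2 : Multiset.map ((Polynomial.map (ev1 p)) ∘ fun r => Polynomial.X - Polynomial.C r) S
        = Multiset.replicate n (Polynomial.X - 1 : (ZMod p)[X]) := by
      rw [hS, Multiset.map_map]
      rw [Multiset.map_congr rfl (fun i _ => by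
        show ((Polynomial.map (ev1 p)) ∘ fun r => Polynomial.X - Polynomial.C r)
          ((tt p) ^ (b i)) = (Polynomial.X - 1 : (ZMod p)[X])
        simp [Polynomial.map_sub, map_pow, ev1_tt])]
      rw [Multiset.map_const']
      simp
    rw [h2, Multiset.prod_replicate]
  rw [hprodmap] at hmapdvd
  set fbar := f.map (ev1 p) with hfbar
  have hfbarc : fbar.coeff (a j0) = ev1 p (w j0) := by
    rw [hfbar, Polynomial.coeff_map, hcoeff]
  have hfbarne : fbar ≠ 0 := by
    intro h
    rw [h, Polynomial.coeff_zero] at hfbarc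
    exact hc0 hfbarc.symm
  have hdegle : fbar.natDegree < p := by
    have h1 : fbar.natDegree ≤ f.natDegree := Polynomial.natDegree_map_le
    have hfdeg : f.natDegree ≤ p - 1 := by
      rw [hf]
      apply Polynomial.natDegree_sum_le_of_forall_le
      intro j _
      exact (Polynomial.natDegree_C_mul_X_pow_le _ _).trans (by have := hap j; omega)
    have := hp.out.pos
    omega
  have hsupcard : fbar.support.card ≤ n := by
    have hsub : fbar.support ⊆ Finset.image a Finset.univ := by
      intro e he
      rw [Polynomial.mem_support_iff] at he
      by_contra hne
      apply he
      rw [hfbar, Polynomial.coeff_map, hf, Polynomial.finset_sum_coeff]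
      rw [Finset.sum_eq_zero, map_zero]
      intro j _
      rw [Polynomial.coeff_C_mul, Polynomial.coeff_X_pow,
        if_neg (fun h => hne (Finset.mem_image.2 ⟨j, Finset.mem_univ j, h.symm⟩)), mul_zero]
    calc fbar.support.card ≤ (Finset.image a Finset.univ).card := Finset.card_le_card hsub
      _ ≤ Finset.univ.card := Finset.card_image_le
      _ = n := by simp
  have hfinal := sparse fbar n hfbarne hdegle hmapdvd
  omega

end TaoUncertaintyAux

open TaoUncertaintyAux in
set_option maxHeartbeats 1000000 in
/-- Tao's additive uncertainty principle: if `p` is prime, then every nonzero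
`x ∈ ℂ^(ZMod p)` satisfies `‖x‖₀ + ‖Fx‖₀ ≥ p + 1`. -/
theorem additive_uncertainty_prime (p : ℕ) [hp : Fact p.Prime]
    (x : ZMod p → ℂ) (hx : x ≠ 0) :
    p + 1 ≤ norm0 x + norm0 (dft p x) := by
  classical
  by_contra hcon
  push_neg at hcon
  set A : Finset (ZMod p) := Finset.univ.filter (fun i => x i ≠ 0) with hA
  set B : Finset (ZMod p) := Finset.univ.filter (fun i => dft p x i ≠ 0) with hB
  have hnormA : norm0 x = A.card := by
    rw [norm0, Nat.card_eq_fintype_card, Fintype.card_subtype]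
  have hnormB : norm0 (dft p x) = B.card := by
    rw [norm0, Nat.card_eq_fintype_card, Fintype.card_subtype]
  have hcards : A.card + B.card ≤ p := by omega
  have hApos : 0 < A.card := by
    obtain ⟨i, hi⟩ := Function.ne_iff.1 hx
    refine Finset.card_pos.2 ⟨i, ?_⟩
    rw [hA, Finset.mem_filter]
    exact ⟨Finset.mem_univ i, by simpa using hi⟩
  have hcardZ : Fintype.card (ZMod p) = p := ZMod.card p
  have hBc : A.card ≤ Bᶜ.card := by
    rw [Finset.card_compl, hcardZ]
    have hBle : B.card ≤ p := by omega
    omega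
  obtain ⟨B', hB'sub, hB'card⟩ := Finset.exists_subset_card_eq hBc
  set n := A.card with hn
  -- enumerations
  set aa : Fin n → ZMod p := fun i => ((A.equivFin.symm i : ZMod p)) with haa
  have haamem : ∀ i, aa i ∈ A := fun i => (A.equivFin.symm i).2
  have haainj : Function.Injective aa :=
    Subtype.coe_injective.comp A.equivFin.symm.injective
  have hB'n : B'.card = n := hB'card
  set eB : Fin n ≃ {x // x ∈ B'} := (Finset.equivFinOfCardEq hB'n).symm with heB
  set bb : Fin n → ZMod p := fun i => (eB i : ZMod p) with hbb
  have hbbmem : ∀ i, bb i ∈ B' := fun i => (eB i).2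
  have hbbinj : Function.Injective bb :=
    Subtype.coe_injective.comp eB.injective
  -- the root of unity
  set ζ : ℂ := Complex.exp (-(2 * (Real.pi : ℂ) * Complex.I / p)) with hzeta
  have hζ : IsPrimitiveRoot ζ p := by
    have h1 : ζ = (Complex.exp (2 * (Real.pi : ℂ) * Complex.I / p))⁻¹ := by
      rw [← Complex.exp_neg]
    rw [h1]
    exact (Complex.isPrimitiveRoot_exp p hp.out.ne_zero).inv
  have hexp : ∀ c b : ZMod p,
      Complex.exp (-(2 * (Real.pi : ℂ) * Complex.I * (c.val : ℂ) * (b.val : ℂ)) / (p : ℂ))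
        = ζ ^ (b.val * c.val) := by
    intro c b
    rw [hzeta, ← Complex.exp_nat_mul]
    congr 1
    push_cast
    ring
  -- sums vanish on B'
  have hsum : ∀ b ∈ B', ∑ c : ZMod p, x c * ζ ^ (b.val * c.val) = 0 := by
    intro b hb'
    have hbc : b ∈ Bᶜ := hB'sub hb'
    have hdftb : dft p x b = 0 := by
      rw [Finset.mem_compl, hB, Finset.mem_filter] at hbc
      push_neg at hbc
      exact hbc (Finset.mem_univ b)
    have hsqrt : ((1 / Real.sqrt p : ℝ) : ℂ) ≠ 0 := by
      rw [Ne, Complex.ofReal_eq_zero]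
      have : (0 : ℝ) < Real.sqrt p := Real.sqrt_pos.2 (by exact_mod_cast hp.out.pos)
      positivity
    rw [dft] at hdftb
    rcases mul_eq_zero.1 hdftb with h | h
    · exact absurd h hsqrt
    · rw [← h]
      apply Finset.sum_congr rfl
      intro c _
      rw [hexp c b]
  -- matrix and kernel vector
  set M : Matrix (Fin n) (Fin n) ℂ :=
    Matrix.of fun i j => ζ ^ ((bb i).val * (aa j).val) with hM
  set v : Fin n → ℂ := fun j => x (aa j) with hv
  have hv0 : v ≠ 0 := by
    intro h
    have hj : aa ⟨0, hApos⟩ ∈ A := haamem _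
    rw [hA, Finset.mem_filter] at hj
    exact hj.2 (congrFun h ⟨0, hApos⟩)
  have hMv : M.mulVec v = 0 := by
    funext i
    rw [Matrix.mulVec, dotProduct]
    simp only [hM, Matrix.of_apply, hv, Pi.zero_apply]
    have hre : ∑ j : Fin n, ζ ^ ((bb i).val * (aa j).val) * x (aa j)
        = ∑ c ∈ A, ζ ^ ((bb i).val * c.val) * x c := by
      rw [← Finset.sum_coe_sort A (fun c => ζ ^ ((bb i).val * (c : ZMod p).val) * x c)]
      exact Fintype.sum_equiv A.equivFin.symm
        (fun j => ζ ^ ((bb i).val * (aa j).val) * x (aa j))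
        (fun s : {y // y ∈ A} => ζ ^ ((bb i).val * (s : ZMod p).val) * x s)
        (fun j => rfl)
    rw [hre]
    have hext : ∑ c ∈ A, ζ ^ ((bb i).val * c.val) * x c
        = ∑ c : ZMod p, ζ ^ ((bb i).val * c.val) * x c := by
      apply Finset.sum_subset (Finset.subset_univ A)
      intro c _ hc
      rw [hA, Finset.mem_filter] at hc
      push_neg at hc
      rw [hc (Finset.mem_univ c), mul_zero]
    rw [hext]
    rw [← hsum (bb i) (hbbmem i)]
    apply Finset.sum_congr rfl
    intro c _
    ring
  have hdet : M.det = 0 := Matrix.exists_mulVec_eq_zero_iff.1 ⟨v, hv0, hMv⟩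
  exact cheb_det_ne_zero p
    (fun g k => sparse_lemma p (k + g.natDegree) g k le_rfl)
    hζ n (fun j => (aa j).val) (fun i => (bb i).val)
    ((ZMod.val_injective p).comp haainj) (fun i => ZMod.val_lt _)
    ((ZMod.val_injective p).comp hbbinj) (fun i => ZMod.val_lt _)
    hdet
end

section
/- Let U be an n×n unitary complex matrix and set μ := max_{i,j} |U_{ij}| (this equals the induced 1→∞ operator norm of U). Then for every nonzero x ∈ ℂⁿ, one has ns(x) · ns(Ux) ≥ 1/μ². -/
open scoped BigOperators

lemma norm2sq_eq_re {N : Type*} [Fintype N] (y : N → ℂ) :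
    norm2sq y = (dotProduct (star y) y).re := by
  simp [norm2sq, dotProduct, Complex.re_sum]
  refine Finset.sum_congr rfl fun i _ => ?_
  rw [Complex.sq_norm, Complex.normSq_apply]

lemma norm1_nonneg {N : Type*} [Fintype N] (x : N → ℂ) : 0 ≤ norm1 x :=
  Finset.sum_nonneg fun i _ => norm_nonneg _

/-- Multiplicative uncertainty principle: if `U` is an `n × n` unitary matrix and
`μ = max_{i,j} |U_{ij}|`, then `ns(x) · ns(Ux) ≥ 1/μ²` for every nonzero `x ∈ ℂⁿ`. -/
theorem multiplicative_uncertainty_principle (n : ℕ) (U : Matrix (Fin n) (Fin n) ℂ)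
    (hU : U ∈ Matrix.unitaryGroup (Fin n) ℂ) (μ : ℝ)
    (hμ : IsGreatest {a : ℝ | ∃ i j, a = ‖U i j‖} μ)
    (x : Fin n → ℂ) (hx : x ≠ 0) :
    ns x * ns (U.mulVec x) ≥ 1 / μ ^ 2 := by
  set y := U.mulVec x with hy
  set A := norm1 x with hA
  set B := norm1 y with hB
  set S := norm2sq x with hS
  -- S > 0
  have hSpos : 0 < S := by
    obtain ⟨i, hi⟩ : ∃ i, x i ≠ 0 := by
      by_contra h
      push_neg at h
      exact hx (funext h)
    refine Finset.sum_pos' (fun j _ => by positivity) ⟨i, Finset.mem_univ i, ?_⟩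
    have : 0 < ‖x i‖ := by simpa using hi
    positivity
  -- norm preservation
  have hnorm : norm2sq y = S := by
    have h1 : U.conjTranspose * U = 1 := hU.1
    rw [hy, norm2sq_eq_re, hS, norm2sq_eq_re]
    congr 1
    rw [Matrix.star_mulVec, Matrix.dotProduct_mulVec, Matrix.vecMul_vecMul, h1,
      Matrix.vecMul_one]
  have hAnn : 0 ≤ A := norm1_nonneg x
  have hBnn : 0 ≤ B := norm1_nonneg y
  -- entrywise bound : |y i| ≤ μ * A
  have hbound : ∀ i, ‖y i‖ ≤ μ * A := by
    intro i
    calc ‖y i‖ ≤ ∑ j, ‖U i j * x j‖ := by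
          rw [hy]
          exact (norm_sum_le Finset.univ (fun j => U i j * x j))
      _ ≤ ∑ j, μ * ‖x j‖ := by
          refine Finset.sum_le_sum fun j _ => ?_
          rw [norm_mul]
          exact mul_le_mul_of_nonneg_right (hμ.2 ⟨i, j, rfl⟩) (norm_nonneg _)
      _ = μ * A := by rw [hA, norm1, Finset.mul_sum]
  -- key: S ≤ μ * A * B
  have hkey : S ≤ μ * A * B := by
    calc S = norm2sq y := hnorm.symm
      _ = ∑ i, ‖y i‖ ^ 2 := rfl
      _ ≤ ∑ i, (μ * A) * ‖y i‖ := by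
          refine Finset.sum_le_sum fun i _ => ?_
          rw [sq]
          exact mul_le_mul_of_nonneg_right (hbound i) (norm_nonneg _)
      _ = μ * A * B := by rw [hB, norm1, Finset.mul_sum]
  -- μ > 0
  have hμpos : 0 < μ := by
    by_contra h
    push_neg at h
    have : μ * A * B ≤ 0 := mul_nonpos_of_nonpos_of_nonneg (mul_nonpos_of_nonpos_of_nonneg h hAnn) hBnn
    linarith
  have h1μ : 1 / μ ≤ A * B / S := by
    rw [div_le_div_iff₀ hμpos hSpos]
    calc 1 * S = S := one_mul S
      _ ≤ μ * A * B := hkey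
      _ = A * B * μ := by ring
  have hns : ns x * ns y = (A * B / S) ^ 2 := by
    rw [ns, ns, hnorm, ← hA, ← hB, ← hS]
    field_simp
  rw [hns]
  calc (1 : ℝ) / μ ^ 2 = (1 / μ) ^ 2 := by rw [div_pow, one_pow]
    _ ≤ (A * B / S) ^ 2 := by
        refine pow_le_pow_left₀ (by positivity) h1μ 2
end

section
/- Let Φ be an m×N complex matrix whose columns all have unit 2-norm, and suppose Φ exhibits (k,θ)-restricted orthogonality for some k ≥ 1 and θ ≥ 0. Then Φ satisfies the (k,δ)-restricted isometry property with δ = 2θ. -/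
open scoped BigOperators

/-- `Φ` exhibits `(k,θ)`-restricted orthogonality: `|⟨Φx,Φy⟩| ≤ θ‖x‖₂‖y‖₂` for all
`k`-sparse `x, y` with disjoint supports. -/
def RestrictedOrthogonality {M N : Type*} [Fintype M] [Fintype N]
    (Φ : Matrix M N ℂ) (k : ℕ) (θ : ℝ) : Prop :=
  ∀ x y : N → ℂ, norm0 x ≤ k → norm0 y ≤ k → (∀ i, x i = 0 ∨ y i = 0) →
    ‖∑ i, (starRingEnd ℂ) (Φ.mulVec x i) * Φ.mulVec y i‖ ≤
      θ * Real.sqrt (norm2sq x) * Real.sqrt (norm2sq y)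

/-- `Φ` satisfies the `(k,δ)`-restricted isometry property:
`(1−δ)‖x‖₂² ≤ ‖Φx‖₂² ≤ (1+δ)‖x‖₂²` for all `k`-sparse `x`. -/
def RIP {M N : Type*} [Fintype M] [Fintype N] (Φ : Matrix M N ℂ) (k : ℕ) (δ : ℝ) : Prop :=
  ∀ x : N → ℂ, norm0 x ≤ k →
    (1 - δ) * norm2sq x ≤ norm2sq (Φ.mulVec x) ∧ norm2sq (Φ.mulVec x) ≤ (1 + δ) * norm2sq x


section RIPAux

open Finset

variable {N : Type*} [Fintype N]

private lemma ripaux_count [DecidableEq N] (a b : N) (hab : a ≠ b) :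
    (4:ℂ) * ∑ A : Finset N, (if a ∈ A then (1:ℂ) else 0) * (if b ∈ A then 0 else 1)
      = 2 ^ Fintype.card N := by
  have hprod := Finset.prod_add (fun i : N => if i = b then (0:ℂ) else 1)
    (fun i : N => if i = a then (0:ℂ) else 1) Finset.univ
  rw [Finset.powerset_univ] at hprod
  have h1 : ∀ t : Finset N, (∏ i ∈ t, if i = b then (0:ℂ) else 1) = if b ∈ t then 0 else 1 := by
    intro t
    split_ifs with h
    · exact Finset.prod_eq_zero h (by simp)
    · exact Finset.prod_eq_one (fun i hi => by simp; rintro rfl; exact h hi)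
  have h2 : ∀ t : Finset N, (∏ i ∈ univ \ t, if i = a then (0:ℂ) else 1)
      = if a ∈ t then 1 else 0 := by
    intro t
    split_ifs with h
    · exact Finset.prod_eq_one (fun i hi => by
        simp only [Finset.mem_sdiff] at hi
        simp; rintro rfl; exact hi.2 h)
    · exact Finset.prod_eq_zero (i := a) (by simpa using h) (by simp)
  have h3 : ∀ i : N, ((if i = b then (0:ℂ) else 1) + (if i = a then (0:ℂ) else 1))
      = if i = a ∨ i = b then 1 else 2 := by
    intro i; split_ifs with h1' h2' h2' <;> simp_all <;> norm_num
  simp only [h1, h2, h3] at hprod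
  have hswap : ∑ A : Finset N, (if a ∈ A then (1:ℂ) else 0) * (if b ∈ A then 0 else 1)
      = ∑ A : Finset N, (if b ∈ A then (0:ℂ) else 1) * (if a ∈ A then 1 else 0) := by
    apply Finset.sum_congr rfl; intro A _; ring
  rw [hswap, ← hprod]
  have he : ∏ i : N, (if i = a ∨ i = b then (2:ℂ) else 1) = 4 := by
    rw [← Finset.prod_subset (Finset.subset_univ ({a,b} : Finset N))
      (fun i _ hi => by
        simp only [Finset.mem_insert, Finset.mem_singleton, not_or] at hi
        simp [hi.1, hi.2])]
    rw [Finset.prod_pair hab]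
    norm_num
  have hmul : (∏ i : N, (if i = a ∨ i = b then (1:ℂ) else 2)) *
      (∏ i : N, (if i = a ∨ i = b then (2:ℂ) else 1)) = ∏ i : N, (2:ℂ) := by
    rw [← Finset.prod_mul_distrib]
    apply Finset.prod_congr rfl; intro i _; split_ifs <;> norm_num
  rw [he] at hmul
  rw [Finset.prod_const, Finset.card_univ] at hmul
  linear_combination hmul

private lemma ripaux_expand {M : Type*} [Fintype M] (Φ : Matrix M N ℂ) (u v : N → ℂ) :
    (∑ i, (starRingEnd ℂ) (Φ.mulVec u i) * Φ.mulVec v i)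
      = ∑ a, ∑ b, (starRingEnd ℂ) (u a) * v b * ∑ i, (starRingEnd ℂ) (Φ i a) * Φ i b := by
  calc (∑ i, (starRingEnd ℂ) (Φ.mulVec u i) * Φ.mulVec v i)
      = ∑ i, ∑ a, ∑ b, ((starRingEnd ℂ) (Φ i a) * (starRingEnd ℂ) (u a)) * (Φ i b * v b) := by
        apply Finset.sum_congr rfl; intro i _
        simp only [Matrix.mulVec, dotProduct, map_sum, map_mul, Finset.sum_mul_sum]
    _ = ∑ a, ∑ b, ∑ i, ((starRingEnd ℂ) (Φ i a) * (starRingEnd ℂ) (u a)) * (Φ i b * v b) := by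
        rw [Finset.sum_comm]
        exact Finset.sum_congr rfl fun a _ => Finset.sum_comm
    _ = ∑ a, ∑ b, (starRingEnd ℂ) (u a) * v b * ∑ i, (starRingEnd ℂ) (Φ i a) * Φ i b := by
        apply Finset.sum_congr rfl; intro a _
        apply Finset.sum_congr rfl; intro b _
        rw [Finset.mul_sum]
        apply Finset.sum_congr rfl; intro i _; ring

private lemma ripaux_diag (x : N → ℂ) :
    ∑ a, (starRingEnd ℂ) (x a) * x a = ((norm2sq x : ℝ) : ℂ) := by
  rw [norm2sq]
  push_cast
  apply Finset.sum_congr rfl; intro a _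
  rw [mul_comm, Complex.mul_conj]
  norm_cast
  exact (Complex.sq_norm _).symm

private lemma ripaux_norm0_restrict [DecidableEq N] (x : N → ℂ) (A : Finset N) :
    norm0 (fun i => if i ∈ A then x i else 0) ≤ norm0 x := by
  have hsub : ∀ i : N, (if i ∈ A then x i else 0) ≠ 0 → x i ≠ 0 := by
    intro i hi
    by_cases h : i ∈ A
    · simpa [h] using hi
    · simp [h] at hi
  rw [norm0, norm0]
  exact Nat.card_le_card_of_injective (fun p => ⟨p.1, hsub p.1 p.2⟩)
    (fun p q h => by
      have h2 := congrArg Subtype.val h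
      exact Subtype.ext h2)

private lemma ripaux_norm2sq_nonneg (x : N → ℂ) : 0 ≤ norm2sq x :=
  Finset.sum_nonneg fun i _ => sq_nonneg _

private lemma ripaux_norm2sq_split [DecidableEq N] (x : N → ℂ) (A : Finset N) :
    norm2sq (fun i => if i ∈ A then x i else 0)
      + norm2sq (fun i => if i ∈ Aᶜ then x i else 0) = norm2sq x := by
  rw [norm2sq, norm2sq, norm2sq, ← Finset.sum_add_distrib]
  apply Finset.sum_congr rfl; intro i _
  by_cases h : i ∈ A <;> simp [h]

end RIPAux

/-- Restricted orthogonality plus unit-norm columns implies the restricted isometry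
property with `δ = 2θ`. -/
theorem restricted_orthogonality_implies_RIP {M N : Type*} [Fintype M] [Fintype N]
    (Φ : Matrix M N ℂ) (k : ℕ) (θ : ℝ) (hk : 1 ≤ k) (hθ : 0 ≤ θ)
    (hcol : ∀ j : N, ∑ i, ‖Φ i j‖ ^ 2 = 1)
    (hro : RestrictedOrthogonality Φ k θ) :
    RIP Φ k (2 * θ) := by
  classical
  intro x hx
  set n := Fintype.card N with hn
  set G : N → N → ℂ := fun a b => ∑ i, (starRingEnd ℂ) (Φ i a) * Φ i b with hG
  set T : (N → ℂ) → (N → ℂ) → ℂ :=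
    fun u v => ∑ i, (starRingEnd ℂ) (Φ.mulVec u i) * Φ.mulVec v i with hTdef
  have hT : ∀ u v : N → ℂ, T u v = ∑ a, ∑ b, (starRingEnd ℂ) (u a) * v b * G a b :=
    fun u v => ripaux_expand Φ u v
  have hGdiag : ∀ a : N, G a a = 1 := by
    intro a
    have : G a a = ∑ i, (starRingEnd ℂ) (Φ i a) * Φ i a := rfl
    rw [this, ripaux_diag (fun i => Φ i a)]
    rw [show norm2sq (fun i => Φ i a) = 1 from hcol a]
    norm_num
  set xr : Finset N → N → ℂ := fun A i => if i ∈ A then x i else 0 with hxr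
  set D : ℂ := ∑ a, ∑ b, if a = b then 0 else (starRingEnd ℂ) (x a) * x b * G a b with hD
  -- T x x = ‖x‖² + D
  have hxx : T x x = ((norm2sq x : ℝ) : ℂ) + D := by
    rw [hT x x, hD]
    rw [← ripaux_diag x, ← Finset.sum_add_distrib]
    apply Finset.sum_congr rfl; intro a _
    rw [show (∑ b, (starRingEnd ℂ) (x a) * x b * G a b)
        = ∑ b, ((if a = b then (starRingEnd ℂ) (x a) * x b * G a b else 0)
            + (if a = b then 0 else (starRingEnd ℂ) (x a) * x b * G a b)) from
      Finset.sum_congr rfl fun b _ => by split_ifs <;> ring]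
    rw [Finset.sum_add_distrib, Finset.sum_ite_eq]
    simp [hGdiag a]
  have hTxx : ((norm2sq (Φ.mulVec x) : ℝ) : ℂ) = T x x := by
    rw [hTdef, ← ripaux_diag (Φ.mulVec x)]
  -- averaging identity
  have havg : (4:ℂ) * ∑ A : Finset N, T (xr A) (xr Aᶜ) = 2 ^ n * D := by
    have hterm : ∀ A : Finset N, T (xr A) (xr Aᶜ)
        = ∑ a, ∑ b, ((if a ∈ A then (1:ℂ) else 0) * (if b ∈ A then 0 else 1))
            * ((starRingEnd ℂ) (x a) * x b * G a b) := by
      intro A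
      rw [hT]
      apply Finset.sum_congr rfl; intro a _
      apply Finset.sum_congr rfl; intro b _
      simp only [hxr, Finset.mem_compl]
      split_ifs <;> simp <;> ring
    simp only [hterm]
    rw [Finset.sum_comm]
    rw [Finset.mul_sum, Finset.mul_sum (f := fun a => ∑ b, if a = b then 0
      else (starRingEnd ℂ) (x a) * x b * G a b)]
    apply Finset.sum_congr rfl; intro a _
    rw [show (∑ A : Finset N, ∑ b, ((if a ∈ A then (1:ℂ) else 0) * (if b ∈ A then 0 else 1))
          * ((starRingEnd ℂ) (x a) * x b * G a b))
        = ∑ b, ∑ A : Finset N, ((if a ∈ A then (1:ℂ) else 0) * (if b ∈ A then 0 else 1))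
          * ((starRingEnd ℂ) (x a) * x b * G a b) from Finset.sum_comm]
    rw [Finset.mul_sum, Finset.mul_sum]
    apply Finset.sum_congr rfl; intro b _
    rw [← Finset.sum_mul, ← mul_assoc]
    by_cases hab : a = b
    · subst hab
      rw [show (∑ A : Finset N, (if a ∈ A then (1:ℂ) else 0) * (if a ∈ A then 0 else 1)) = 0 from
        Finset.sum_eq_zero fun A _ => by by_cases h : a ∈ A <;> simp [h]]
      simp
    · rw [ripaux_count a b hab]
      simp [hab, hn]
  -- bound on each term
  have hbound : ∀ A : Finset N, ‖T (xr A) (xr Aᶜ)‖ ≤ θ * (norm2sq x / 2) := by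
    intro A
    have h1 : ‖T (xr A) (xr Aᶜ)‖
        ≤ θ * Real.sqrt (norm2sq (xr A)) * Real.sqrt (norm2sq (xr Aᶜ)) := by
      apply hro
      · exact le_trans (ripaux_norm0_restrict x A) hx
      · exact le_trans (ripaux_norm0_restrict x Aᶜ) hx
      · intro i
        by_cases h : i ∈ A
        · right; simp [hxr, h]
        · left; simp [hxr, h]
    refine le_trans h1 ?_
    rw [mul_assoc]
    apply mul_le_mul_of_nonneg_left _ hθ
    have hs := ripaux_norm2sq_split x A
    have ha := ripaux_norm2sq_nonneg (fun i => if i ∈ A then x i else 0)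
    have hb := ripaux_norm2sq_nonneg (fun i => if i ∈ Aᶜ then x i else 0)
    have hxa : norm2sq (xr A) = norm2sq (fun i => if i ∈ A then x i else 0) := rfl
    have hxb : norm2sq (xr Aᶜ) = norm2sq (fun i => if i ∈ Aᶜ then x i else 0) := rfl
    rw [hxa, hxb]
    set p := norm2sq (fun i => if i ∈ A then x i else 0)
    set q := norm2sq (fun i => if i ∈ Aᶜ then x i else 0)
    nlinarith [sq_nonneg (Real.sqrt p - Real.sqrt q), Real.sq_sqrt ha, Real.sq_sqrt hb,
      Real.sqrt_nonneg p, Real.sqrt_nonneg q]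
  -- conclude |D| ≤ 2θ‖x‖²
  have habs : ‖D‖ ≤ 2 * θ * norm2sq x := by
    have hpow : (0:ℝ) < 2 ^ n := by positivity
    have h2 : ‖(2:ℂ) ^ n * D‖ = 2 ^ n * ‖D‖ := by
      rw [norm_mul, norm_pow]; norm_num
    have h3 : ‖(4:ℂ) * ∑ A : Finset N, T (xr A) (xr Aᶜ)‖
        ≤ 4 * (2 ^ n * (θ * (norm2sq x / 2))) := by
      rw [norm_mul]
      have : ‖(4:ℂ)‖ = 4 := by norm_num
      rw [this]
      apply mul_le_mul_of_nonneg_left _ (by norm_num : (0:ℝ) ≤ 4)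
      refine le_trans (norm_sum_le _ _) ?_
      refine le_trans (Finset.sum_le_sum fun A _ => hbound A) ?_
      rw [Finset.sum_const, Finset.card_univ, Fintype.card_finset, nsmul_eq_mul]
      push_cast
      exact le_refl _
    rw [havg, h2] at h3
    have : 2 ^ n * ‖D‖ ≤ 2 ^ n * (2 * θ * norm2sq x) := by
      calc 2 ^ n * ‖D‖ ≤ 4 * (2 ^ n * (θ * (norm2sq x / 2))) := h3
        _ = 2 ^ n * (2 * θ * norm2sq x) := by ring
    exact le_of_mul_le_mul_left this hpow
  have hDr : D = ((norm2sq (Φ.mulVec x) - norm2sq x : ℝ) : ℂ) := by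
    push_cast
    rw [← hTxx] at hxx
    linear_combination -hxx
  rw [hDr, Complex.norm_real, Real.norm_eq_abs] at habs
  have h := abs_le.mp habs
  constructor
  · linarith [h.1]
  · linarith [h.2]
end

section
/- Let n ≥ 1 and let F : ℂ^(ZMod n) → ℂ^(ZMod n) be the unitary discrete Fourier transform. Then for every nonzero x ∈ ℂ^(ZMod n), ns(x)·ns(Fx) = n if and only if ‖x‖₀·‖Fx‖₀ = n. -/
open scoped BigOperators

section Aux
open Complex Finset Real

private lemma sum_val (n : ℕ) [NeZero n] (f : ℕ → ℂ) :
    ∑ k : ZMod n, f k.val = ∑ i ∈ Finset.range n, f i := by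
  refine Finset.sum_nbij' (fun k => k.val) (fun i => (i : ZMod n)) ?_ ?_ ?_ ?_ ?_ <;> intro a ha
  · exact Finset.mem_range.mpr (ZMod.val_lt a)
  · exact Finset.mem_univ _
  · exact ZMod.natCast_rightInverse a
  · exact ZMod.val_cast_of_lt (Finset.mem_range.mp ha)
  · rfl

private lemma char_sum (n : ℕ) [NeZero n] (a b : ℕ) (ha : a < n) (hb : b < n) :
    ∑ k : ZMod n, Complex.exp (2 * (π:ℂ) * I * ((a:ℂ) - b) * k.val / n) =
      if a = b then (n : ℂ) else 0 := by
  have hn : (n:ℂ) ≠ 0 := Nat.cast_ne_zero.mpr (NeZero.ne n)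
  have hmc : ((((a:ℤ) - b : ℤ)):ℂ) = (a:ℂ) - b := by push_cast; ring
  set z : ℂ := Complex.exp (2 * (π:ℂ) * I * ((a:ℂ) - b) / n) with hz
  have hterm : ∀ k : ZMod n, Complex.exp (2 * (π:ℂ) * I * ((a:ℂ) - b) * k.val / n) = z ^ k.val := by
    intro k
    rw [hz, ← Complex.exp_nat_mul]
    ring_nf
  simp_rw [hterm]
  rw [sum_val n (fun i => z ^ i)]
  rcases eq_or_ne a b with h | h
  · simp [h, hz]
  · rw [if_neg h]
    have hzn : z ^ n = 1 := by
      rw [hz, ← Complex.exp_nat_mul]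
      have : (n:ℂ) * (2 * (π:ℂ) * I * ((a:ℂ) - b) / n) = ((((a:ℤ) - b : ℤ)):ℂ) * (2 * π * I) := by
        rw [hmc]; field_simp
      rw [this, Complex.exp_int_mul_two_pi_mul_I]
    have hz1 : z ≠ 1 := by
      rw [hz]
      intro hc
      obtain ⟨t, ht⟩ := Complex.exp_eq_one_iff.mp hc
      have h2 : (2:ℂ) * π * I ≠ 0 := by
        simp [Real.pi_ne_zero, Complex.I_ne_zero, Complex.ofReal_ne_zero]
      have hmt : ((((a:ℤ) - b : ℤ)):ℂ) = t * n := by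
        rw [hmc]
        field_simp at ht
        apply mul_right_cancel₀ h2
        rw [show ((a:ℂ) - b) * (2 * π * I) = 2 * π * I * ((a:ℂ) - b) by ring, ht]; ring
      have hmt' : (a:ℤ) - b = t * n := by exact_mod_cast hmt
      have hdvd : (n:ℤ) ∣ (a:ℤ) - b := ⟨t, by rw [hmt', mul_comm]⟩
      have habs : |(a:ℤ) - b| < n := by rw [abs_sub_lt_iff]; omega
      have := Int.eq_zero_of_abs_lt_dvd hdvd habs
      omega
    rw [geom_sum_eq hz1, hzn, sub_self, zero_div]

variable (n : ℕ) [NeZero n]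

private lemma hnpos : (0:ℝ) < n := Nat.cast_pos.mpr (Nat.pos_of_ne_zero (NeZero.ne n))

private lemma csq : (((1 / Real.sqrt n : ℝ)):ℂ)^2 = 1 / n := by
  have h := hnpos n
  rw [← Complex.ofReal_pow]
  rw [div_pow, one_pow, Real.sq_sqrt h.le]
  norm_num

private lemma orth (j j' : ZMod n) :
    ∑ k : ZMod n,
      Complex.exp (-(2 * (π : ℂ) * I * (j.val : ℂ) * (k.val : ℂ)) / n) *
        (starRingEnd ℂ) (Complex.exp (-(2 * (π : ℂ) * I * (j'.val : ℂ) * (k.val : ℂ)) / n)) =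
      if j' = j then (n:ℂ) else 0 := by
  have h1 : ∀ k : ZMod n,
      Complex.exp (-(2 * (π : ℂ) * I * (j.val : ℂ) * (k.val : ℂ)) / n) *
        (starRingEnd ℂ) (Complex.exp (-(2 * (π : ℂ) * I * (j'.val : ℂ) * (k.val : ℂ)) / n)) =
      Complex.exp (2 * (π:ℂ) * I * ((j'.val:ℂ) - (j.val:ℂ)) * (k.val:ℂ) / n) := by
    intro k
    rw [← Complex.exp_conj, ← Complex.exp_add]
    congr 1
    simp only [map_div₀, map_neg, map_mul, Complex.conj_I, Complex.conj_ofReal,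
      Complex.conj_natCast, map_ofNat]
    ring
  simp_rw [h1]
  rw [char_sum n j'.val j.val (ZMod.val_lt _) (ZMod.val_lt _)]
  congr 1
  simp only [eq_iff_iff]
  exact ⟨fun h => ZMod.val_injective n h, fun h => by rw [h]⟩

private lemma parseval (x : ZMod n → ℂ) : norm2sq (dft n x) = norm2sq x := by
  apply Complex.ofReal_injective
  have cast1 : ∀ (N : Type) (_ : Fintype N) (y : N → ℂ),
      ((norm2sq y : ℝ):ℂ) = ∑ k, y k * (starRingEnd ℂ) (y k) := by
    intro N _ y
    rw [norm2sq, Complex.ofReal_sum]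
    exact Finset.sum_congr rfl fun k _ => by
      rw [Complex.mul_conj]; norm_cast; exact Complex.sq_norm _
  rw [cast1, cast1]
  set c : ℂ := (((1 / Real.sqrt n : ℝ)):ℂ) with hc
  have hcconj : (starRingEnd ℂ) c = c := Complex.conj_ofReal _
  set E : ZMod n → ZMod n → ℂ := fun j k =>
    Complex.exp (-(2 * (π : ℂ) * I * (j.val : ℂ) * (k.val : ℂ)) / n) with hE
  have expand : ∀ k, dft n x k * (starRingEnd ℂ) (dft n x k) =
      c^2 * ∑ j : ZMod n, ∑ j' : ZMod n,
        (x j * (starRingEnd ℂ) (x j')) * (E j k * (starRingEnd ℂ) (E j' k)) := by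
    intro k
    show (c * ∑ j, x j * E j k) * (starRingEnd ℂ) (c * ∑ j, x j * E j k) = _
    rw [map_mul, map_sum, hcconj]
    rw [show (c * ∑ j, x j * E j k) * (c * ∑ j, (starRingEnd ℂ) (x j * E j k))
        = c^2 * ((∑ j, x j * E j k) * (∑ j', (starRingEnd ℂ) (x j' * E j' k))) by ring]
    rw [Finset.sum_mul_sum]
    congr 1
    refine Finset.sum_congr rfl fun j _ => Finset.sum_congr rfl fun j' _ => ?_
    rw [map_mul]; ring
  simp_rw [expand]
  rw [← Finset.mul_sum, Finset.sum_comm]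
  have swap2 : ∀ j : ZMod n, ∑ k : ZMod n, ∑ j' : ZMod n,
      (x j * (starRingEnd ℂ) (x j')) * (E j k * (starRingEnd ℂ) (E j' k)) =
      ∑ j' : ZMod n, (x j * (starRingEnd ℂ) (x j')) * ∑ k, E j k * (starRingEnd ℂ) (E j' k) := by
    intro j
    rw [Finset.sum_comm]
    exact Finset.sum_congr rfl fun j' _ => by rw [Finset.mul_sum]
  simp_rw [swap2, hE, orth n]
  have : ∀ j : ZMod n, ∑ j' : ZMod n,
      (x j * (starRingEnd ℂ) (x j')) * (if j' = j then (n:ℂ) else 0) =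
      x j * (starRingEnd ℂ) (x j) * n := by
    intro j
    rw [Finset.sum_eq_single j]
    · simp
    · intro b _ hb; simp [hb]
    · simp
  simp_rw [this]
  rw [← Finset.sum_mul, ← mul_assoc]
  rw [show c^2 * (∑ j, x j * (starRingEnd ℂ) (x j)) * n
      = (c^2 * n) * ∑ j, x j * (starRingEnd ℂ) (x j) by ring]
  rw [hc, csq n]
  have hn : (n:ℂ) ≠ 0 := Nat.cast_ne_zero.mpr (NeZero.ne n)
  field_simp

private lemma inversion (x : ZMod n → ℂ) (j : ZMod n) :
    x j = (1 / Real.sqrt n : ℝ) *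
      ∑ k : ZMod n, dft n x k *
        Complex.exp (2 * (π : ℂ) * I * (j.val : ℂ) * (k.val : ℂ) / n) := by
  set c : ℂ := (((1 / Real.sqrt n : ℝ)):ℂ) with hc
  have expand : ∀ k : ZMod n, dft n x k *
        Complex.exp (2 * (π : ℂ) * I * (j.val : ℂ) * (k.val : ℂ) / n)
      = c * ∑ j' : ZMod n, x j' *
          Complex.exp (2 * (π:ℂ) * I * ((j.val:ℂ) - (j'.val:ℂ)) * (k.val:ℂ) / n) := by
    intro k
    show (c * ∑ j', x j' * _) * _ = _
    rw [mul_assoc, Finset.sum_mul]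
    congr 1
    refine Finset.sum_congr rfl fun j' _ => ?_
    rw [mul_assoc, ← Complex.exp_add]
    congr 2
    ring
  simp_rw [expand]
  rw [← Finset.mul_sum, Finset.sum_comm]
  have swap2 : ∑ j' : ZMod n, ∑ k : ZMod n, x j' *
      Complex.exp (2 * (π:ℂ) * I * ((j.val:ℂ) - (j'.val:ℂ)) * (k.val:ℂ) / n)
      = ∑ j' : ZMod n, x j' * (if j.val = j'.val then (n:ℂ) else 0) := by
    refine Finset.sum_congr rfl fun j' _ => ?_
    rw [← Finset.mul_sum, char_sum n j.val j'.val (ZMod.val_lt _) (ZMod.val_lt _)]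
  rw [swap2]
  rw [Finset.sum_eq_single j]
  · simp only [if_pos rfl]
    rw [← mul_assoc, ← mul_assoc, hc, ← Complex.ofReal_mul]
    have h := hnpos n
    rw [show (1 / Real.sqrt n) * (1 / Real.sqrt n) = 1 / n by
      rw [div_mul_div_comm, one_mul, Real.mul_self_sqrt h.le]]
    have hn : (n:ℂ) ≠ 0 := Nat.cast_ne_zero.mpr (NeZero.ne n)
    push_cast
    field_simp
  · intro b _ hb
    rw [if_neg (fun h => hb (ZMod.val_injective n h).symm), mul_zero]
  · simp

private lemma abs_dft_le (x : ZMod n → ℂ) (k : ZMod n) :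
    ‖dft n x k‖ ≤ norm1 x / Real.sqrt n := by
  have hn0 := hnpos n
  have hC : 0 < Real.sqrt n := Real.sqrt_pos.mpr hn0
  show ‖(((1 / Real.sqrt n : ℝ)):ℂ) * ∑ j : ZMod n, x j *
      Complex.exp (-(2 * (π : ℂ) * I * (j.val : ℂ) * (k.val : ℂ)) / n)‖ ≤ _
  rw [norm_mul, Complex.norm_real, Real.norm_eq_abs, abs_of_pos (by positivity)]
  calc (1 / Real.sqrt n) * ‖∑ j : ZMod n, x j *
        Complex.exp (-(2 * (π : ℂ) * I * (j.val : ℂ) * (k.val : ℂ)) / n)‖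
      ≤ (1 / Real.sqrt n) * norm1 x := by
        refine mul_le_mul_of_nonneg_left ?_ (by positivity)
        calc ‖∑ j : ZMod n, x j *
              Complex.exp (-(2 * (π : ℂ) * I * (j.val : ℂ) * (k.val : ℂ)) / n)‖
            ≤ ∑ j : ZMod n, ‖x j *
              Complex.exp (-(2 * (π : ℂ) * I * (j.val : ℂ) * (k.val : ℂ)) / n)‖ :=
              norm_sum_le _ _
          _ = ∑ j : ZMod n, ‖x j‖ := by
              refine Finset.sum_congr rfl fun j _ => ?_
              rw [norm_mul, show -(2 * (π:ℂ) * I * (j.val:ℂ) * (k.val:ℂ)) / n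
                  = ((-(2 * π * j.val * k.val) / n : ℝ) : ℂ) * I by push_cast; ring,
                Complex.norm_exp_ofReal_mul_I, mul_one]
          _ = norm1 x := rfl
    _ = norm1 x / Real.sqrt n := by ring

private lemma abs_le_dft (x : ZMod n → ℂ) (j : ZMod n) :
    ‖x j‖ ≤ norm1 (dft n x) / Real.sqrt n := by
  have hn0 := hnpos n
  have hC : 0 < Real.sqrt n := Real.sqrt_pos.mpr hn0
  rw [inversion n x j, norm_mul, Complex.norm_real, Real.norm_eq_abs, abs_of_pos (by positivity)]
  calc (1 / Real.sqrt n) * ‖∑ k : ZMod n, dft n x k *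
        Complex.exp (2 * (π : ℂ) * I * (j.val : ℂ) * (k.val : ℂ) / n)‖
      ≤ (1 / Real.sqrt n) * norm1 (dft n x) := by
        refine mul_le_mul_of_nonneg_left ?_ (by positivity)
        calc ‖∑ k : ZMod n, dft n x k *
              Complex.exp (2 * (π : ℂ) * I * (j.val : ℂ) * (k.val : ℂ) / n)‖
            ≤ ∑ k : ZMod n, ‖dft n x k *
              Complex.exp (2 * (π : ℂ) * I * (j.val : ℂ) * (k.val : ℂ) / n)‖ :=
              norm_sum_le _ _
          _ = ∑ k : ZMod n, ‖dft n x k‖ := by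
              refine Finset.sum_congr rfl fun k _ => ?_
              rw [norm_mul, show 2 * (π:ℂ) * I * (j.val:ℂ) * (k.val:ℂ) / n
                  = (((2 * π * j.val * k.val) / n : ℝ) : ℂ) * I by push_cast; ring,
                Complex.norm_exp_ofReal_mul_I, mul_one]
          _ = norm1 (dft n x) := rfl
    _ = norm1 (dft n x) / Real.sqrt n := by ring

end Aux

section NormAux
open Complex Finset
variable {N : Type*} [Fintype N] (x : N → ℂ)

private lemma norm0_eq : norm0 x = (Finset.univ.filter (fun i => x i ≠ 0)).card := by
  rw [norm0, Nat.card_eq_fintype_card, Fintype.card_subtype]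

private lemma norm1_eq : norm1 x = ∑ i ∈ Finset.univ.filter (fun i => x i ≠ 0), ‖x i‖ :=
  (Finset.sum_filter_of_ne fun i _ h => by simpa using h).symm

private lemma norm2sq_eq :
    norm2sq x = ∑ i ∈ Finset.univ.filter (fun i => x i ≠ 0), ‖x i‖ ^ 2 :=
  (Finset.sum_filter_of_ne fun i _ h => by
    intro h0; rw [h0] at h; simp at h).symm

private lemma norm2sq_pos (hx : x ≠ 0) : 0 < norm2sq x := by
  obtain ⟨i, hi⟩ := Function.ne_iff.mp hx
  have hpos := norm_pos_iff.mpr hi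
  have : (0:ℝ) < ‖x i‖ ^ 2 := by positivity
  exact lt_of_lt_of_le this (Finset.single_le_sum (f := fun i => ‖x i‖ ^ 2)
    (fun j _ => by positivity) (Finset.mem_univ i))

private lemma norm1_pos (hx : x ≠ 0) : 0 < norm1 x := by
  obtain ⟨i, hi⟩ := Function.ne_iff.mp hx
  have : (0:ℝ) < ‖x i‖ := norm_pos_iff.mpr hi
  exact lt_of_lt_of_le this (Finset.single_le_sum (f := fun i => ‖x i‖)
    (fun j _ => by positivity) (Finset.mem_univ i))

private lemma ns_pos (hx : x ≠ 0) : 0 < ns x :=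
  div_pos (by have := norm1_pos x hx; positivity) (norm2sq_pos x hx)

private lemma ns_le_norm0 (hx : x ≠ 0) : ns x ≤ (norm0 x : ℝ) := by
  rw [ns, div_le_iff₀ (norm2sq_pos x hx), norm0_eq, norm1_eq, norm2sq_eq]
  calc (∑ i ∈ Finset.univ.filter (fun i => x i ≠ 0), ‖x i‖) ^ 2
      ≤ (Finset.univ.filter (fun i => x i ≠ 0)).card *
        ∑ i ∈ Finset.univ.filter (fun i => x i ≠ 0), ‖x i‖ ^ 2 :=
        sq_sum_le_card_mul_sum_sq
    _ = _ := by ring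

private lemma ns_eq_norm0 (hx : x ≠ 0) (M : ℝ)
    (h : ∀ i, x i = 0 ∨ ‖x i‖ = M) : ns x = (norm0 x : ℝ) := by
  obtain ⟨i0, hi0⟩ := Function.ne_iff.mp hx
  have hM : 0 < M := by
    rcases h i0 with h' | h'
    · exact absurd h' hi0
    · rw [← h']; exact norm_pos_iff.mpr hi0
  set s := Finset.univ.filter (fun i => x i ≠ 0) with hs
  have h1 : norm1 x = s.card * M := by
    rw [norm1_eq]
    rw [Finset.sum_congr rfl (fun i hi => ?_), Finset.sum_const, nsmul_eq_mul]
    rcases h i with h' | h'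
    · exact absurd h' (Finset.mem_filter.mp hi).2
    · exact h'
  have h2 : norm2sq x = s.card * M ^ 2 := by
    rw [norm2sq_eq]
    rw [Finset.sum_congr rfl (fun i hi => ?_), Finset.sum_const, nsmul_eq_mul]
    rcases h i with h' | h'
    · exact absurd h' (Finset.mem_filter.mp hi).2
    · rw [h']
  have hcard : (0:ℝ) < s.card := by
    have : i0 ∈ s := Finset.mem_filter.mpr ⟨Finset.mem_univ _, hi0⟩
    exact_mod_cast Finset.card_pos.mpr ⟨i0, this⟩
  rw [ns, h1, h2, norm0_eq, ← hs]
  field_simp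

end NormAux

/-- Equality in the multiplicative numerical-sparsity uncertainty principle for the DFT
occurs exactly when equality occurs in the classical one:
`ns(x)·ns(Fx) = n ↔ ‖x‖₀·‖Fx‖₀ = n`. -/
theorem ns_equality_iff_sparsity_equality (n : ℕ) [NeZero n]
    (x : ZMod n → ℂ) (hx : x ≠ 0) :
    ns x * ns (dft n x) = (n : ℝ) ↔ norm0 x * norm0 (dft n x) = n := by
  have hn0 : (0:ℝ) < n := hnpos n
  set C : ℝ := Real.sqrt n with hCdef
  have hC : 0 < C := Real.sqrt_pos.mpr hn0
  have hC2 : C ^ 2 = n := Real.sq_sqrt hn0.le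
  set y := dft n x with hy
  have hP : norm2sq y = norm2sq x := parseval n x
  have h2x := norm2sq_pos x hx
  have hy0 : y ≠ 0 := by
    intro h
    rw [h] at hP
    have h0 : norm2sq (0 : ZMod n → ℂ) = 0 := by simp [norm2sq]
    rw [h0] at hP
    linarith
  have h1x := norm1_pos x hx
  have h1y := norm1_pos y hy0
  have h2y : 0 < norm2sq y := hP ▸ h2x
  have bound1 : ∀ k, ‖y k‖ ≤ norm1 x / C := fun k => abs_dft_le n x k
  have bound2 : ∀ j, ‖x j‖ ≤ norm1 y / C := fun j => abs_le_dft n x j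
  have hsum1y : ∑ k : ZMod n, ‖y k‖ = norm1 y := rfl
  have key : norm2sq x ≤ norm1 x * norm1 y / C := by
    calc norm2sq x = norm2sq y := hP.symm
      _ = ∑ k : ZMod n, ‖y k‖ ^ 2 := rfl
      _ ≤ ∑ k : ZMod n, ‖y k‖ * (norm1 x / C) :=
          Finset.sum_le_sum fun k _ => by
            rw [sq]
            exact mul_le_mul_of_nonneg_left (bound1 k) (norm_nonneg _)
      _ = norm1 y * (norm1 x / C) := by rw [← Finset.sum_mul, hsum1y]
      _ = norm1 x * norm1 y / C := by ring
  have nsprod : ns x * ns y = (norm1 x * norm1 y) ^ 2 / (norm2sq x) ^ 2 := by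
    rw [ns, ns, hP, div_mul_div_comm, ← mul_pow, ← pow_two]
  have lower : (n:ℝ) ≤ ns x * ns y := by
    rw [nsprod, le_div_iff₀ (by positivity)]
    have hkey' : C * norm2sq x ≤ norm1 x * norm1 y := by
      rw [le_div_iff₀ hC] at key
      linarith [key]
    calc (n:ℝ) * norm2sq x ^ 2 = (C * norm2sq x) ^ 2 := by rw [mul_pow, hC2]
      _ ≤ (norm1 x * norm1 y) ^ 2 := by
          apply pow_le_pow_left₀ (by positivity) hkey'
  constructor
  · intro h
    have heq : norm1 x * norm1 y = C * norm2sq x := by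
      have h1 : (norm1 x * norm1 y) ^ 2 = (C * norm2sq x) ^ 2 := by
        have h' : (norm1 x * norm1 y) ^ 2 / (norm2sq x) ^ 2 = n := by rw [← nsprod]; exact h
        rw [div_eq_iff (by positivity : ((norm2sq x)^2 : ℝ) ≠ 0)] at h'
        rw [h', mul_pow, hC2]
      nlinarith [h1, mul_pos h1x h1y, mul_pos hC h2x]
    have hcross : norm1 y * (norm1 x / C) = norm2sq x := by
      field_simp
      linarith [heq]
    have eqy : ∀ k, y k = 0 ∨ ‖y k‖ = norm1 x / C := by
      have hsum : ∑ k : ZMod n, (‖y k‖ * (norm1 x / C) - ‖y k‖ ^ 2) = 0 := by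
        rw [Finset.sum_sub_distrib, ← Finset.sum_mul, hsum1y]
        have : ∑ k : ZMod n, ‖y k‖ ^ 2 = norm2sq x := hP
        rw [this, hcross, sub_self]
      have hterm : ∀ k ∈ Finset.univ, (0:ℝ) ≤ ‖y k‖ * (norm1 x / C) - ‖y k‖ ^ 2 := by
        intro k _
        have := bound1 k
        nlinarith [norm_nonneg (y k)]
      have hzero := (Finset.sum_eq_zero_iff_of_nonneg hterm).mp hsum
      intro k
      have hk := hzero k (Finset.mem_univ k)
      have hfac : ‖y k‖ * (norm1 x / C - ‖y k‖) = 0 := by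
        rw [mul_sub]; rw [← sq]; linarith [hk]
      rcases mul_eq_zero.mp hfac with h' | h'
      · left; exact norm_eq_zero.mp h'
      · right; linarith
    have eqx : ∀ j, x j = 0 ∨ ‖x j‖ = norm1 y / C := by
      have hcross2 : norm1 x * (norm1 y / C) = norm2sq x := by
        field_simp
        linarith [heq]
      have hsum : ∑ j : ZMod n, (‖x j‖ * (norm1 y / C) - ‖x j‖ ^ 2) = 0 := by
        rw [Finset.sum_sub_distrib, ← Finset.sum_mul]
        have e1 : ∑ j : ZMod n, ‖x j‖ = norm1 x := rfl
        have e2 : ∑ j : ZMod n, ‖x j‖ ^ 2 = norm2sq x := rfl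
        rw [e1, e2, hcross2, sub_self]
      have hterm : ∀ j ∈ Finset.univ, (0:ℝ) ≤ ‖x j‖ * (norm1 y / C) - ‖x j‖ ^ 2 := by
        intro j _
        have := bound2 j
        nlinarith [norm_nonneg (x j)]
      have hzero := (Finset.sum_eq_zero_iff_of_nonneg hterm).mp hsum
      intro j
      have hj := hzero j (Finset.mem_univ j)
      have hfac : ‖x j‖ * (norm1 y / C - ‖x j‖) = 0 := by
        rw [mul_sub]; rw [← sq]; linarith [hj]
      rcases mul_eq_zero.mp hfac with h' | h'
      · left; exact norm_eq_zero.mp h'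
      · right; linarith
    have nx : ns x = (norm0 x : ℝ) := ns_eq_norm0 x hx _ eqx
    have ny : ns y = (norm0 y : ℝ) := ns_eq_norm0 y hy0 _ eqy
    have hfin : ((norm0 x : ℝ)) * (norm0 y : ℝ) = (n:ℝ) := by rw [← nx, ← ny]; exact h
    exact_mod_cast hfin
  · intro h
    have upper : ns x * ns y ≤ (norm0 x : ℝ) * (norm0 y : ℝ) :=
      mul_le_mul (ns_le_norm0 x hx) (ns_le_norm0 y hy0) (ns_pos y hy0).le (Nat.cast_nonneg _)
    have hcast : ((norm0 x : ℝ)) * (norm0 y : ℝ) = (n:ℝ) := by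
      rw [← Nat.cast_mul, h]
    linarith [lower, upper]
end

section
/- Let n ≥ 3, let F : ℂ^(ZMod n) → ℂ^(ZMod n) be the unitary discrete Fourier transform, and let x ∈ ℂ^(ZMod n) be the discrete Gaussian. Then ns(x)·ns(Fx) ≤ (√n + 1)⁴ / (√(n/2) − 1)². (In particular, ns(x)·ns(Fx) ≤ (2 + o(1))·n as n → ∞.) -/
open scoped BigOperators

/-- The discrete Gaussian `x[j] = Σ_{j'∈ℤ} exp(−nπ(j/n + j')²)`. -/
noncomputable def discreteGaussian (n : ℕ) [NeZero n] : ZMod n → ℂ := fun j =>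
  ∑' j' : ℤ, (Real.exp (-(n : ℝ) * Real.pi * ((j.val : ℝ) / (n : ℝ) + (j' : ℝ)) ^ 2) : ℂ)

section Auxiliary

open Real Complex MeasureTheory Set

lemma summable_gauss_int (c d : ℝ) (hc : 0 < c) :
    Summable (fun m : ℤ ↦ rexp (-c * ((m : ℝ) + d)^2)) := by
  have := HurwitzKernelBounds.summable_f_int 0 d (t := c / π) (by positivity)
  apply this.congr
  intro m
  simp only [HurwitzKernelBounds.f_int, pow_zero, one_mul]
  congr 1
  field_simp

lemma summable_gauss_int' (c : ℝ) (hc : 0 < c) :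
    Summable (fun m : ℤ ↦ rexp (-c * (m : ℝ)^2)) := by
  simpa using summable_gauss_int c 0 hc

lemma summable_gauss_nat (c : ℝ) (hc : 0 < c) :
    Summable (fun m : ℕ ↦ rexp (-c * (m : ℝ)^2)) := by
  have := (summable_gauss_int' c hc).comp_injective
    (fun a b h => Int.ofNat_inj.mp h : Function.Injective (fun m : ℕ ↦ (m : ℤ)))
  simpa [Function.comp_def] using this

lemma gauss_antitoneOn (c : ℝ) (hc : 0 < c) (s : Set ℝ) (hs : s ⊆ Ici 0) :
    AntitoneOn (fun t : ℝ ↦ rexp (-c * t^2)) s := by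
  intro a ha b hb hab
  have ha' : (0:ℝ) ≤ a := hs ha
  have h2 : a^2 ≤ b^2 := pow_le_pow_left₀ ha' hab 2
  simp only
  apply Real.exp_le_exp.2
  nlinarith

lemma tsum_int_gauss_eq (c : ℝ) (hc : 0 < c) :
    ∑' m : ℤ, rexp (-c * (m:ℝ)^2) = 2 * (∑' m : ℕ, rexp (-c * (m:ℝ)^2)) - 1 := by
  have h := tsum_nat_add_neg (f := fun m : ℤ ↦ rexp (-c * (m:ℝ)^2)) (summable_gauss_int' c hc)
  simp only [Int.cast_natCast, Int.cast_neg, neg_sq, Int.cast_zero] at h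
  rw [(summable_gauss_nat c hc).tsum_add (summable_gauss_nat c hc)] at h
  rw [← sub_eq_iff_eq_add] at h
  rw [← h]
  norm_num
  ring

lemma tsum_nat_gauss_le (c : ℝ) (hc : 0 < c) :
    ∑' m : ℕ, rexp (-c * (m:ℝ)^2) ≤ 1 + Real.sqrt (π/c) / 2 := by
  rw [(summable_gauss_nat c hc).tsum_eq_zero_add]
  simp only [Nat.cast_zero, ne_eq, OfNat.ofNat_ne_zero, not_false_eq_true, zero_pow, mul_zero,
    Real.exp_zero]
  gcongr
  apply tsum_le_of_sum_range_le (fun n => (Real.exp_pos _).le)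
  intro N
  have key : ∑ i ∈ Finset.range N, (fun t : ℝ ↦ rexp (-c * t^2)) ((0:ℝ) + (i + 1 : ℕ)) ≤
      ∫ x in (0:ℝ)..((0:ℝ) + N), rexp (-c * x^2) := by
    exact AntitoneOn.sum_le_integral
      (gauss_antitoneOn c hc _ (fun x hx => hx.1))
  simp only [zero_add] at key
  refine le_trans (le_of_eq ?_) (key.trans ?_)
  · exact Finset.sum_congr rfl (fun i _ => by simp)
  · rw [intervalIntegral.integral_of_le (by positivity), ← integral_gaussian_Ioi c]
    apply setIntegral_mono_set ((integrable_exp_neg_mul_sq hc).integrableOn)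
    · filter_upwards with x using (Real.exp_pos _).le
    · filter_upwards with x hx using hx.1

lemma le_tsum_nat_gauss (c : ℝ) (hc : 0 < c) :
    Real.sqrt (π/c) / 2 ≤ ∑' m : ℕ, rexp (-c * (m:ℝ)^2) := by
  rw [← integral_gaussian_Ioi c]
  have tend := intervalIntegral_tendsto_integral_Ioi (μ := volume) (a := 0)
    (f := fun x : ℝ ↦ rexp (-c * x^2)) ((integrable_exp_neg_mul_sq hc).integrableOn)
    (tendsto_natCast_atTop_atTop (R := ℝ))
  refine le_of_tendsto tend ?_
  filter_upwards with N
  have key : ∫ x in (0:ℝ)..((0:ℝ) + N), rexp (-c * x^2) ≤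
      ∑ i ∈ Finset.range N, (fun t : ℝ ↦ rexp (-c * t^2)) ((0:ℝ) + i) := by
    exact AntitoneOn.integral_le_sum
      (gauss_antitoneOn c hc _ (fun x hx => hx.1))
  simp only [zero_add] at key
  refine key.trans ?_
  apply (summable_gauss_nat c hc).sum_le_tsum _ (fun n _ => (Real.exp_pos _).le)

lemma tsum_int_gauss_le (c : ℝ) (hc : 0 < c) :
    ∑' m : ℤ, rexp (-c * (m:ℝ)^2) ≤ 1 + Real.sqrt (π/c) := by
  rw [tsum_int_gauss_eq c hc]
  have := tsum_nat_gauss_le c hc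
  linarith

lemma le_tsum_int_gauss (c : ℝ) (hc : 0 < c) :
    Real.sqrt (π/c) - 1 ≤ ∑' m : ℤ, rexp (-c * (m:ℝ)^2) := by
  rw [tsum_int_gauss_eq c hc]
  have := le_tsum_nat_gauss c hc
  linarith

/-- The equivalence `ZMod n × ℤ ≃ ℤ`, `(j, j') ↦ j.val + n * j'`. -/
def zmodIntEquiv (n : ℕ) [NeZero n] : ZMod n × ℤ ≃ ℤ where
  toFun p := (p.1.val : ℤ) + n * p.2
  invFun m := ((m : ZMod n), (m - ((m : ZMod n).val : ℤ)) / n)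
  left_inv p := by
    obtain ⟨j, j'⟩ := p
    have h0 : ((((j.val : ℤ) + n * j' : ℤ)) : ZMod n) = j := by
      push_cast
      simp [ZMod.natCast_val, ZMod.cast_id]
    have hn : (n : ℤ) ≠ 0 := by exact_mod_cast (NeZero.ne n)
    simp only [h0, Prod.mk.injEq]
    refine ⟨trivial, ?_⟩
    rw [add_sub_cancel_left, Int.mul_ediv_cancel_left _ hn]
  right_inv m := by
    have hdvd : (n : ℤ) ∣ (m - ((m : ZMod n).val : ℤ)) := by
      rw [← ZMod.intCast_zmod_eq_zero_iff_dvd]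
      push_cast
      simp [ZMod.natCast_val, ZMod.cast_id]
    simp only
    rw [Int.mul_ediv_cancel' hdvd]
    ring

lemma tsum_zmod_int {n : ℕ} [NeZero n] {α : Type*} [AddCommGroup α] [UniformSpace α]
    [IsUniformAddGroup α] [CompleteSpace α] [T2Space α] (f : ℤ → α) (hf : Summable f) :
    ∑ j : ZMod n, ∑' j' : ℤ, f ((j.val : ℤ) + n * j') = ∑' m : ℤ, f m := by
  have hsum : Summable (fun p : ZMod n × ℤ => f (zmodIntEquiv n p)) :=
    (zmodIntEquiv n).summable_iff.mpr hf
  rw [← (zmodIntEquiv n).tsum_eq f, hsum.tsum_prod, tsum_fintype]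
  rfl

lemma sq_tsum_le {ι : Type*} [Countable ι] (f : ι → ℝ) (hf : Summable f)
    (h0 : ∀ i, 0 ≤ f i) : ∑' i, (f i)^2 ≤ (∑' i, f i)^2 := by
  set S := ∑' i, f i with hS
  have hle : ∀ i, f i ≤ S := fun i => hf.le_tsum i (fun j _ => h0 j)
  have hbd : ∀ i, (f i)^2 ≤ f i * S := fun i => by
    rw [sq]
    exact mul_le_mul_of_nonneg_left (hle i) (h0 i)
  have hsum2 : Summable (fun i => (f i)^2) :=
    Summable.of_nonneg_of_le (fun i => sq_nonneg _) hbd (hf.mul_right S)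
  calc ∑' i, (f i)^2 ≤ ∑' i, f i * S := hsum2.tsum_le_tsum hbd (hf.mul_right S)
    _ = S * S := by rw [tsum_mul_right]
    _ = S^2 := (sq S).symm

lemma dft_discreteGaussian (n : ℕ) [NeZero n] :
    dft n (discreteGaussian n) = discreteGaussian n := by
  have hn0 : (0:ℝ) < n := Nat.cast_pos.mpr (Nat.pos_of_ne_zero (NeZero.ne n))
  have hnC : (n:ℂ) ≠ 0 := by exact_mod_cast hn0.ne'
  have hs : Real.sqrt n ≠ 0 := ne_of_gt (Real.sqrt_pos.mpr hn0)
  funext k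
  set K : ℝ := (k.val : ℝ) with hK
  set a : ℂ := ((1/n : ℝ) : ℂ) with ha_def
  set b : ℂ := -((K/n : ℝ) : ℂ) * I with hb_def
  have ha : 0 < a.re := by rw [ha_def, Complex.ofReal_re]; positivity
  set F : ℤ → ℂ := fun m => cexp (-π * a * (m:ℂ) ^ 2 + 2 * π * b * (m:ℂ)) with hF_def
  have hFsum : Summable F := by
    apply Summable.of_norm
    have hnorm : ∀ m : ℤ, ‖F m‖ = rexp (-(π/n) * ((m:ℝ) + 0)^2) := by
      intro m
      rw [hF_def]
      have harg' : -(π:ℂ) * a * (m:ℂ) ^ 2 + 2 * π * b * (m:ℂ)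
          = ((-(π/n) * (m:ℝ)^2 : ℝ) : ℂ) + ((-2*π*(K/n)*(m:ℝ) : ℝ) : ℂ) * I := by
        rw [ha_def, hb_def]
        push_cast
        ring
      simp only [harg']
      rw [Complex.norm_exp, Complex.add_re, Complex.ofReal_re,
        Complex.re_ofReal_mul, Complex.I_re, mul_zero, add_zero]
      norm_num
    rw [funext hnorm]
    exact summable_gauss_int (π/n) 0 (by positivity)
  have poisson := Complex.tsum_exp_neg_quadratic ha b
  have hterm : ∀ j : ZMod n,
      discreteGaussian n j * cexp (-(2 * (π:ℂ) * I * (j.val : ℂ) * (k.val : ℂ)) / n)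
        = ∑' j' : ℤ, F ((j.val : ℤ) + n * j') := by
    intro j
    rw [discreteGaussian, ← tsum_mul_right]
    congr 1
    funext j'
    simp only [hF_def]
    have hsplit : -(π:ℂ) * a * (((j.val : ℤ) + n * j' : ℤ):ℂ) ^ 2
          + 2 * π * b * (((j.val : ℤ) + n * j' : ℤ):ℂ)
        = ((-(n : ℝ) * π * ((j.val : ℝ) / (n : ℝ) + (j' : ℝ)) ^ 2 : ℝ) : ℂ)
          + (-(2 * (π:ℂ) * I * (j.val : ℂ) * (k.val : ℂ)) / n)
          + (-(j' * (k.val : ℤ)) : ℤ) * (2 * π * I) := by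
      rw [ha_def, hb_def, hK]
      push_cast
      field_simp
      ring
    rw [hsplit, Complex.exp_add, Complex.exp_add, Complex.exp_int_mul_two_pi_mul_I, mul_one,
      Complex.ofReal_exp]
  have hsqrt : a ^ (1/2:ℂ) = ((1/Real.sqrt n : ℝ) : ℂ) := by
    rw [ha_def, show (1/2:ℂ) = ((1/2:ℝ):ℂ) by norm_num, ← Complex.ofReal_cpow (by positivity),
      ← Real.sqrt_eq_rpow, one_div, Real.sqrt_inv, ← one_div]
  have hIb : I * b = ((K/n : ℝ) : ℂ) := by
    rw [hb_def]
    have : I * (-((K/n:ℝ):ℂ) * I) = -((K/n:ℝ):ℂ) * (I*I) := by ring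
    rw [this, Complex.I_mul_I]
    ring
  have hRHS : ∑' m : ℤ, cexp (-(π:ℂ) / a * ((m:ℂ) + I * b) ^ 2) = discreteGaussian n k := by
    rw [discreteGaussian]
    congr 1
    funext m
    have harg2 : -(π:ℂ) / a * ((m:ℂ) + I * b) ^ 2
        = ((-(n : ℝ) * π * ((k.val : ℝ) / (n : ℝ) + (m : ℝ)) ^ 2 : ℝ) : ℂ) := by
      rw [hIb, ha_def, ← hK]
      push_cast
      field_simp
      ring
    rw [harg2, Complex.ofReal_exp]
  rw [dft]
  rw [Finset.sum_congr rfl (fun j _ => hterm j), tsum_zmod_int F hFsum]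
  rw [hF_def, poisson, hRHS, hsqrt]
  rw [Complex.ofReal_div, Complex.ofReal_one]
  rw [one_div_one_div]
  rw [div_mul_eq_mul_div, one_mul, mul_comm, mul_div_assoc,
    div_self (by exact_mod_cast hs), mul_one]

/-- The real-valued discrete Gaussian. -/
noncomputable def gaussReal (n : ℕ) [NeZero n] (j : ZMod n) : ℝ :=
  ∑' j' : ℤ, rexp (-(n : ℝ) * π * ((j.val : ℝ) / (n : ℝ) + (j' : ℝ)) ^ 2)

lemma summable_gaussReal (n : ℕ) [NeZero n] (j : ZMod n) :
    Summable (fun j' : ℤ ↦ rexp (-(n : ℝ) * π * ((j.val : ℝ) / (n : ℝ) + (j' : ℝ)) ^ 2)) := by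
  have hn0 : (0:ℝ) < n := Nat.cast_pos.mpr (Nat.pos_of_ne_zero (NeZero.ne n))
  have := summable_gauss_int ((n:ℝ) * π) ((j.val : ℝ) / n) (by positivity)
  apply this.congr
  intro m
  congr 1
  ring

lemma discreteGaussian_eq (n : ℕ) [NeZero n] (j : ZMod n) :
    discreteGaussian n j = ((gaussReal n j : ℝ) : ℂ) := by
  rw [discreteGaussian, gaussReal, Complex.ofReal_tsum]

lemma gaussReal_nonneg (n : ℕ) [NeZero n] (j : ZMod n) : 0 ≤ gaussReal n j :=
  tsum_nonneg (fun j' => (Real.exp_pos _).le)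

lemma abs_discreteGaussian (n : ℕ) [NeZero n] (j : ZMod n) :
    ‖discreteGaussian n j‖ = gaussReal n j := by
  rw [discreteGaussian_eq, Complex.norm_real, Real.norm_eq_abs, _root_.abs_of_nonneg (gaussReal_nonneg n j)]

lemma gaussReal_term_eq (n : ℕ) [NeZero n] (j : ZMod n) (j' : ℤ) :
    rexp (-(n : ℝ) * π * ((j.val : ℝ) / (n : ℝ) + (j' : ℝ)) ^ 2)
      = rexp (-(π/n) * ((((j.val : ℤ) + n * j' : ℤ)):ℝ)^2) := by
  have hn0 : (0:ℝ) < n := Nat.cast_pos.mpr (Nat.pos_of_ne_zero (NeZero.ne n))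
  congr 1
  push_cast
  field_simp

lemma norm1_discreteGaussian (n : ℕ) [NeZero n] :
    norm1 (discreteGaussian n) = ∑' m : ℤ, rexp (-(π/n) * (m:ℝ)^2) := by
  have hn0 : (0:ℝ) < n := Nat.cast_pos.mpr (Nat.pos_of_ne_zero (NeZero.ne n))
  rw [norm1]
  rw [← tsum_zmod_int (n := n) (fun m : ℤ => rexp (-(π/n) * (m:ℝ)^2))
    (summable_gauss_int' (π/n) (by positivity))]
  apply Finset.sum_congr rfl
  intro j _
  rw [abs_discreteGaussian, gaussReal]
  exact tsum_congr (fun j' => gaussReal_term_eq n j j')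

lemma norm2sq_discreteGaussian_ge (n : ℕ) [NeZero n] :
    ∑' m : ℤ, rexp (-(2*π/n) * (m:ℝ)^2) ≤ norm2sq (discreteGaussian n) := by
  have hn0 : (0:ℝ) < n := Nat.cast_pos.mpr (Nat.pos_of_ne_zero (NeZero.ne n))
  rw [norm2sq]
  rw [← tsum_zmod_int (n := n) (fun m : ℤ => rexp (-(2*π/n) * (m:ℝ)^2))
    (summable_gauss_int' (2*π/n) (by positivity))]
  apply Finset.sum_le_sum
  intro j _
  rw [abs_discreteGaussian]
  have hterm : ∀ j' : ℤ, rexp (-(2*π/n) * ((((j.val : ℤ) + n * j' : ℤ)):ℝ)^2)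
      = (rexp (-(n : ℝ) * π * ((j.val : ℝ) / (n : ℝ) + (j' : ℝ)) ^ 2))^2 := by
    intro j'
    rw [← Real.exp_nat_mul]
    congr 1
    push_cast
    field_simp
  calc ∑' j' : ℤ, rexp (-(2*π/n) * ((((j.val : ℤ) + n * j' : ℤ)):ℝ)^2)
      = ∑' j' : ℤ, (rexp (-(n : ℝ) * π * ((j.val : ℝ) / (n : ℝ) + (j' : ℝ)) ^ 2))^2 :=
        tsum_congr hterm
    _ ≤ (gaussReal n j)^2 :=
        sq_tsum_le _ (summable_gaussReal n j) (fun j' => (Real.exp_pos _).le)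

end Auxiliary

/-- The discrete Gaussian achieves near equality in the multiplicative uncertainty
principle: `ns(x)·ns(Fx) ≤ (√n + 1)⁴ / (√(n/2) − 1)²` (which is `(2 + o(1))·n`). -/
theorem discreteGaussian_near_equality (n : ℕ) [NeZero n] (hn : 3 ≤ n) :
    ns (discreteGaussian n) * ns (dft n (discreteGaussian n)) ≤
      (Real.sqrt n + 1) ^ 4 / (Real.sqrt ((n : ℝ) / 2) - 1) ^ 2 := by
  have hn3 : (3:ℝ) ≤ (n:ℝ) := by exact_mod_cast hn
  have hn0 : (0:ℝ) < n := by linarith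
  rw [dft_discreteGaussian n]
  have hA : norm1 (discreteGaussian n) ≤ Real.sqrt n + 1 := by
    rw [norm1_discreteGaussian]
    have h := tsum_int_gauss_le (Real.pi/n) (by positivity)
    have hc : Real.pi/(Real.pi/(n:ℝ)) = (n:ℝ) := by
      field_simp
    rw [hc] at h
    linarith
  have hB : Real.sqrt ((n:ℝ)/2) - 1 ≤ norm2sq (discreteGaussian n) := by
    have h := le_tsum_int_gauss (2*Real.pi/n) (by positivity)
    have hc : Real.pi/(2*Real.pi/(n:ℝ)) = (n:ℝ)/2 := by
      field_simp
    rw [hc] at h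
    exact h.trans (norm2sq_discreteGaussian_ge n)
  have hBpos : 0 < Real.sqrt ((n:ℝ)/2) - 1 := by
    have h1 : (1:ℝ) < Real.sqrt ((n:ℝ)/2) :=
      calc (1:ℝ) = Real.sqrt 1 := Real.sqrt_one.symm
        _ < Real.sqrt ((n:ℝ)/2) := Real.sqrt_lt_sqrt (by norm_num) (by linarith)
    linarith
  have hA0 : 0 ≤ norm1 (discreteGaussian n) :=
    Finset.sum_nonneg (fun i _ => norm_nonneg _)
  have hB0 : 0 ≤ norm2sq (discreteGaussian n) :=
    Finset.sum_nonneg (fun i _ => sq_nonneg _)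
  have hns : ns (discreteGaussian n) ≤
      (Real.sqrt n + 1)^2 / (Real.sqrt ((n:ℝ)/2) - 1) := by
    rw [ns]
    exact div_le_div₀ (by positivity) (pow_le_pow_left₀ hA0 hA 2) hBpos hB
  have hns0 : 0 ≤ ns (discreteGaussian n) := div_nonneg (sq_nonneg _) hB0
  calc ns (discreteGaussian n) * ns (discreteGaussian n)
      ≤ ((Real.sqrt n + 1)^2 / (Real.sqrt ((n:ℝ)/2) - 1)) *
        ((Real.sqrt n + 1)^2 / (Real.sqrt ((n:ℝ)/2) - 1)) :=
        mul_le_mul hns hns hns0 (le_trans hns0 hns)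
    _ = (Real.sqrt n + 1) ^ 4 / (Real.sqrt ((n : ℝ) / 2) - 1) ^ 2 := by
        rw [div_mul_div_comm]
        congr 1 <;> ring
end

section
/- Let n ≥ 1, let f : ℝ → ℂ be a Schwartz function, and define x ∈ ℂ^(ZMod n) by x[j] := Σ_{j'∈ℤ} f(j/n + j') for any integer representative j of the residue (the value is independent of the representative). Then the unitary discrete Fourier transform of x satisfies (Fx)[k] = √n · Σ_{k'∈ℤ} f̂(k + k'·n) for every k ∈ ZMod n (any integer representative k), where f̂(ξ) := ∫_ℝ f(t)·e^(−2πi·tξ) dt is the Fourier transform of f. -/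
open scoped BigOperators

open scoped FourierTransform

open Complex Finset in
lemma expsum (n : ℕ) [NeZero n] (c : ℤ) :
    ∑ j : ZMod n, Complex.exp (2 * (Real.pi : ℂ) * Complex.I * (j.val : ℂ) * (c : ℂ) / n)
      = if (c : ZMod n) = 0 then (n : ℂ) else 0 := by
  have hn : (n : ℂ) ≠ 0 := Nat.cast_ne_zero.mpr (NeZero.ne n)
  set z : ℂ := Complex.exp (2 * (Real.pi : ℂ) * Complex.I * (c : ℂ) / n) with hz
  have hterm : ∀ j : ZMod n,
      Complex.exp (2 * (Real.pi : ℂ) * Complex.I * (j.val : ℂ) * (c : ℂ) / n) = z ^ j.val := by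
    intro j
    rw [hz, ← Complex.exp_nat_mul]
    ring_nf
  simp_rw [hterm]
  have hsum : ∑ j : ZMod n, z ^ j.val = ∑ i ∈ Finset.range n, z ^ i := by
    refine Finset.sum_nbij' (fun j => j.val) (fun i => (i : ZMod n)) ?_ ?_ ?_ ?_ ?_
    · intro a _; exact Finset.mem_range.mpr (ZMod.val_lt a)
    · intro a _; exact Finset.mem_univ _
    · intro a _; simp [ZMod.natCast_val]
    · intro a ha; exact ZMod.val_cast_of_lt (Finset.mem_range.mp ha)
    · intro a _; rfl
  rw [hsum]
  by_cases h : (c : ZMod n) = 0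
  · obtain ⟨d, hd⟩ := (ZMod.intCast_zmod_eq_zero_iff_dvd c n).mp h
    have hz1 : z = 1 := by
      rw [hz]
      have : 2 * (Real.pi : ℂ) * Complex.I * (c : ℂ) / n = (d : ℂ) * (2 * Real.pi * Complex.I) := by
        rw [hd]; push_cast; field_simp
      rw [this]
      exact Complex.exp_int_mul_two_pi_mul_I d
    simp [hz1, h]
  · have hzn : z ^ n = 1 := by
      rw [hz, ← Complex.exp_nat_mul]
      have : (n : ℂ) * (2 * (Real.pi : ℂ) * Complex.I * (c : ℂ) / n) = (c : ℂ) * (2 * Real.pi * Complex.I) := by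
        field_simp
      rw [this]
      exact Complex.exp_int_mul_two_pi_mul_I c
    have hz1 : z ≠ 1 := by
      intro hz1
      obtain ⟨d, hd⟩ := Complex.exp_eq_one_iff.mp (hz ▸ hz1)
      apply h
      rw [ZMod.intCast_zmod_eq_zero_iff_dvd]
      refine ⟨d, ?_⟩
      have hpi : (Real.pi : ℂ) ≠ 0 := by exact_mod_cast Real.pi_ne_zero
      have : (c : ℂ) = (n : ℂ) * d := by
        have h2 : 2 * (Real.pi : ℂ) * Complex.I * (c : ℂ) = 2 * (Real.pi : ℂ) * Complex.I * ((n : ℂ) * d) := by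
          field_simp at hd
          linear_combination (2 * (Real.pi : ℂ) * Complex.I) * hd
        have h3 : 2 * (Real.pi : ℂ) * Complex.I ≠ 0 := by
          simp [hpi, Complex.I_ne_zero]
        exact mul_left_cancel₀ h3 h2
      exact_mod_cast this
    rw [geom_sum_eq hz1, hzn]
    simp [h]

set_option maxHeartbeats 1000000 in
/-- Poisson-summation type lemma: if `x` is obtained by periodizing and sampling a
Schwartz function `f`, then `(Fx)[k] = √n · Σ_{k'∈ℤ} f̂(k + k'n)`. -/
theorem dft_of_periodized_schwartz (n : ℕ) [NeZero n] (f : SchwartzMap ℝ ℂ)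
    (x : ZMod n → ℂ) (hxf : ∀ j : ZMod n, x j = ∑' j' : ℤ, f ((j.val : ℝ) / (n : ℝ) + (j' : ℝ)))
    (k : ZMod n) :
    dft n x k = Real.sqrt n * ∑' k' : ℤ, 𝓕 (fun t : ℝ => f t) ((k.val : ℝ) + (k' : ℝ) * n) := by
  have hn0 : (0 : ℝ) < n := by exact_mod_cast Nat.pos_of_ne_zero (NeZero.ne n)
  have hnC : (n : ℂ) ≠ 0 := Nat.cast_ne_zero.mpr (NeZero.ne n)
  set F : ℤ → ℂ := fun m => 𝓕 (⇑f) m with hF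
  -- summability of F
  have hFsummable : Summable F := by
    apply summable_of_isBigO (Real.summable_abs_int_rpow one_lt_two)
    exact ((SchwartzMap.fourierTransformCLM ℝ f).isBigO_cocompact_rpow (-2)).comp_tendsto
      Int.tendsto_coe_cofinite
  have hFnorm : Summable fun m : ℤ => ‖F m‖ := hFsummable.norm
  -- Poisson summation at j.val / n
  have hp : ∀ j : ZMod n, x j =
      ∑' m : ℤ, F m * Complex.exp (2 * (Real.pi : ℂ) * Complex.I * (m : ℂ) * ((j.val : ℝ) / n : ℝ)) := by
    intro j
    rw [hxf j, SchwartzMap.tsum_eq_tsum_fourier f ((j.val : ℝ) / n)]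
    congr 1
    ext m
    rw [fourier_coe_apply]
    simp only [SchwartzMap.fourierTransformCLM_apply, SchwartzMap.fourier_coe, hF]
    push_cast
    ring_nf
  simp only [dft]
  have key : ∀ j : ZMod n,
      x j * Complex.exp (-(2 * (Real.pi : ℂ) * Complex.I * (j.val : ℂ) * (k.val : ℂ)) / (n : ℂ))
        = ∑' m : ℤ, F m *
            Complex.exp (2 * (Real.pi : ℂ) * Complex.I * (j.val : ℂ) * ((m : ℂ) - (k.val : ℂ)) / n) := by
    intro j
    rw [hp j, ← tsum_mul_right]
    refine tsum_congr fun m => ?_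
    rw [mul_assoc, ← Complex.exp_add]
    congr 2
    push_cast
    field_simp
    ring
  rw [Finset.sum_congr rfl fun j _ => key j]
  have hsummE : ∀ j : ZMod n, Summable fun m : ℤ => F m *
      Complex.exp (2 * (Real.pi : ℂ) * Complex.I * (j.val : ℂ) * ((m : ℂ) - (k.val : ℂ)) / n) := by
    intro j
    refine Summable.of_norm_bounded hFnorm fun m => ?_
    rw [norm_mul]
    have h1 : (2 * (Real.pi : ℂ) * Complex.I * (j.val : ℂ) * ((m : ℂ) - (k.val : ℂ)) / n)
        = ((2 * Real.pi * (j.val : ℝ) * ((m : ℝ) - (k.val : ℝ)) / n : ℝ) : ℂ) * Complex.I := by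
      push_cast; ring
    rw [h1]
    simp [Complex.norm_exp]
  rw [← Summable.tsum_finsetSum fun j _ => hsummE j]
  have inner : ∀ m : ℤ,
      (∑ j : ZMod n, F m *
        Complex.exp (2 * (Real.pi : ℂ) * Complex.I * (j.val : ℂ) * ((m : ℂ) - (k.val : ℂ)) / n))
        = F m * (if (m : ZMod n) = k then (n : ℂ) else 0) := by
    intro m
    rw [← Finset.mul_sum]
    congr 1
    have h2 : ∀ j : ZMod n,
        (2 * (Real.pi : ℂ) * Complex.I * (j.val : ℂ) * ((m : ℂ) - (k.val : ℂ)) / n)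
          = 2 * (Real.pi : ℂ) * Complex.I * (j.val : ℂ) * (((m - (k.val : ℤ) : ℤ)) : ℂ) / n := by
      intro j; push_cast; ring
    simp_rw [h2]
    rw [expsum n (m - (k.val : ℤ))]
    have hiff : (((m - (k.val : ℤ) : ℤ)) : ZMod n) = 0 ↔ (m : ZMod n) = k := by
      push_cast
      rw [sub_eq_zero]
      simp [ZMod.natCast_val, ZMod.cast_id]
    exact if_congr hiff rfl rfl
  rw [tsum_congr inner]
  set g : ℤ → ℂ := fun m => F m * (if (m : ZMod n) = k then (n : ℂ) else 0) with hg
  have hinj : Function.Injective (fun k' : ℤ => ((k.val : ℤ) + k' * n)) := by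
    intro a b hab
    simp only at hab
    have hne : (n : ℤ) ≠ 0 := by exact_mod_cast NeZero.ne n
    have := add_left_cancel hab
    exact mul_right_cancel₀ hne this
  have hsupp : Function.support g ⊆ Set.range (fun k' : ℤ => ((k.val : ℤ) + k' * n)) := by
    intro m hm
    have hmk : (m : ZMod n) = k := by
      by_contra h
      exact hm (by simp [hg, h])
    have h0 : (((m - (k.val : ℤ) : ℤ)) : ZMod n) = 0 := by
      push_cast
      rw [sub_eq_zero]
      simp [hmk, ZMod.natCast_val, ZMod.cast_id]
    obtain ⟨d, hd⟩ := (ZMod.intCast_zmod_eq_zero_iff_dvd _ n).mp h0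
    exact ⟨d, by simp only []; linear_combination -hd⟩
  rw [← Function.Injective.tsum_eq hinj hsupp]
  have hval : ∀ k' : ℤ, g ((k.val : ℤ) + k' * n)
      = 𝓕 (fun t : ℝ => f t) ((k.val : ℝ) + (k' : ℝ) * n) * n := by
    intro k'
    have hcond : ((((k.val : ℤ) + k' * n : ℤ)) : ZMod n) = k := by
      push_cast
      simp [ZMod.natCast_val, ZMod.cast_id]
    have harg : (((k.val : ℤ) + k' * n : ℤ) : ℝ) = (k.val : ℝ) + (k' : ℝ) * n := by
      push_cast; ring
    simp only [hg, hF]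
    rw [if_pos hcond, harg]
  rw [tsum_congr hval, tsum_mul_right]
  have hs : Real.sqrt n ≠ 0 := ne_of_gt (Real.sqrt_pos.mpr hn0)
  have hss : ((Real.sqrt n : ℝ) : ℂ) * ((Real.sqrt n : ℝ) : ℂ) = (n : ℂ) := by
    exact_mod_cast congrArg Complex.ofReal (Real.mul_self_sqrt hn0.le)
  have hsC : ((Real.sqrt n : ℝ) : ℂ) ≠ 0 := by exact_mod_cast hs
  rw [← hss]
  push_cast
  field_simp
  exact tsum_congr fun x => by rw [mul_comm (x : ℝ)]
end

section
/- Let k, n, m be positive integers with k dividing n, and let Φ be the random m×n partial Fourier matrix obtained by drawing m rows independently and uniformly from the rows of the n×n unitary discrete Fourier transform matrix. Then the probability that the nullspace of Φ contains a nonzero vector with at most k nonzero entries is at least k·(1 − 1/k)^m − (k(k−1)/2)·(1 − 2/k)^m. -/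
open scoped BigOperators
open Finset

/-- The random partial Fourier matrix: row `i` is the `j i`-th row of the `n × n`
unitary DFT matrix. -/
noncomputable def partialFourier (n m : ℕ) (j : Fin m → ZMod n) : Matrix (Fin m) (ZMod n) ℂ :=
  Matrix.of fun i ℓ =>
    (1 / Real.sqrt n : ℝ) *
      Complex.exp (-(2 * (Real.pi : ℂ) * Complex.I * ((j i).val : ℂ) * (ℓ.val : ℂ)) / (n : ℂ))



lemma fiber_card (n k : ℕ) [NeZero n] [NeZero k] (hkn : k ∣ n) (a : ZMod k) :
    (Finset.univ.filter fun x : ZMod n => ((x.val : ZMod k) = a)).card = n / k := by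
  classical
  have hk : 0 < k := Nat.pos_of_ne_zero (NeZero.ne k)
  have hn : 0 < n := Nat.pos_of_ne_zero (NeZero.ne n)
  have himg : (Finset.univ.filter fun x : ZMod n => ((x.val : ZMod k) = a))
      = (Finset.range (n / k)).image (fun t => ((a.val + t * k : ℕ) : ZMod n)) := by
    ext x
    simp only [mem_filter, mem_univ, true_and, mem_image, mem_range]
    constructor
    · intro hx
      refine ⟨x.val / k, Nat.div_lt_div_of_lt_of_dvd hkn (ZMod.val_lt x), ?_⟩
      have hmod : x.val % k = a.val := by
        have := congrArg ZMod.val hx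
        rwa [ZMod.val_natCast] at this
      have : a.val + x.val / k * k = x.val := by
        rw [← hmod]; exact Nat.mod_add_div' x.val k
      rw [this, ZMod.natCast_val, ZMod.cast_id]
    · rintro ⟨t, ht, rfl⟩
      have hlt : a.val + t * k < n := by
        have h1 : a.val < k := ZMod.val_lt a
        have h2 : k * (n / k) = n := Nat.mul_div_cancel' hkn
        have : t * k ≤ (n / k - 1) * k := Nat.mul_le_mul_right k (by omega)
        nlinarith [Nat.sub_le (n/k) 1]
      rw [ZMod.val_cast_of_lt hlt]
      push_cast
      simp [ZMod.natCast_self, ZMod.natCast_val, ZMod.cast_id]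
      
  rw [himg, Finset.card_image_of_injOn, Finset.card_range]
  intro t ht t' ht' he
  simp only [coe_range, Set.mem_Iio] at ht ht'
  have hlt : ∀ s, s < n / k → a.val + s * k < n := by
    intro s hs
    have h1 : a.val < k := ZMod.val_lt a
    have h2 : k * (n / k) = n := Nat.mul_div_cancel' hkn
    nlinarith
  have := congrArg ZMod.val he
  rw [ZMod.val_cast_of_lt (hlt t ht), ZMod.val_cast_of_lt (hlt t' ht')] at this
  have h2 : t * k = t' * k := by omega
  exact Nat.eq_of_mul_eq_mul_right hk h2


lemma bonferroni {ι α : Type*} [Fintype ι] [DecidableEq ι] [DecidableEq α]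
    (A : ι → Finset α) (U : Finset α) (hU : ∀ a, A a ⊆ U) :
    (∑ a, ((A a).card : ℝ)) -
      (1/2) * ∑ p ∈ (Finset.univ : Finset ι).offDiag, (((A p.1 ∩ A p.2).card : ℝ))
      ≤ U.card := by
  classical
  set f : ι → α → ℝ := fun a x => if x ∈ A a then 1 else 0 with hf
  have hcard : ∀ a, ((A a).card : ℝ) = ∑ x ∈ U, f a x := by
    intro a
    rw [hf]
    simp only
    rw [Finset.sum_boole]
    congr 1
    rw [Finset.filter_mem_eq_inter, Finset.inter_eq_right.mpr (hU a)]
  set t : α → ℝ := fun x => ∑ a, f a x with ht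
  have h1 : (∑ a, ((A a).card : ℝ)) = ∑ x ∈ U, t x := by
    rw [Finset.sum_congr rfl (fun a _ => hcard a), Finset.sum_comm]
  have hfsq : ∀ a x, f a x * f a x = f a x := by
    intro a x
    by_cases h : x ∈ A a <;> simp [hf, h]
  have hcard2 : ∀ a b, ((A a ∩ A b).card : ℝ) = ∑ x ∈ U, f a x * f b x := by
    intro a b
    have : ∀ x, f a x * f b x = if x ∈ A a ∩ A b then 1 else 0 := by
      intro x
      by_cases h1 : x ∈ A a <;> by_cases h2 : x ∈ A b <;> simp [hf, h1, h2]
    rw [Finset.sum_congr rfl (fun x _ => this x), Finset.sum_boole]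
    congr 1
    rw [Finset.filter_mem_eq_inter, Finset.inter_eq_right.mpr ((Finset.inter_subset_left).trans (hU a))]
  have h2 : ∑ p ∈ (Finset.univ : Finset ι).offDiag, (((A p.1 ∩ A p.2).card : ℝ))
      = ∑ x ∈ U, (t x ^ 2 - t x) := by
    rw [Finset.sum_congr rfl (fun p _ => hcard2 p.1 p.2), Finset.sum_comm]
    apply Finset.sum_congr rfl
    intro x _
    have hoff : (Finset.univ : Finset ι).offDiag
        = ((Finset.univ : Finset ι) ×ˢ (Finset.univ : Finset ι)).filter (fun p => p.1 ≠ p.2) := by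
      ext p; simp
    rw [hoff]
    have hsplit := Finset.sum_filter_add_sum_filter_not
      ((Finset.univ : Finset ι) ×ˢ (Finset.univ : Finset ι)) (fun p => p.1 ≠ p.2)
      (fun p => f p.1 x * f p.2 x)
    have hall : ∑ p ∈ ((Finset.univ : Finset ι) ×ˢ (Finset.univ : Finset ι)),
        f p.1 x * f p.2 x = t x ^ 2 := by
      rw [Finset.sum_product, ht]
      simp only
      rw [sq, Finset.sum_mul_sum]
    have hdiagset : ((Finset.univ : Finset ι) ×ˢ (Finset.univ : Finset ι)).filter
        (fun p => ¬ p.1 ≠ p.2) = (Finset.univ : Finset ι).diag := by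
      ext p
      simp
    have hdiag : ∑ p ∈ ((Finset.univ : Finset ι) ×ˢ (Finset.univ : Finset ι)).filter
        (fun p => ¬ p.1 ≠ p.2), f p.1 x * f p.2 x = t x := by
      rw [hdiagset, Finset.sum_diag]
      rw [ht]
      simp only
      exact Finset.sum_congr rfl (fun a _ => hfsq a x)
    linarith [hsplit, hall, hdiag]
  rw [h1, h2]
  have hpoint : ∀ x ∈ U, t x - (1/2) * (t x ^ 2 - t x) ≤ 1 := by
    intro x _
    have : ∃ c : ℕ, t x = c := by
      refine ⟨(Finset.univ.filter (fun a => x ∈ A a)).card, ?_⟩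
      rw [ht]; simp only [hf]
      rw [Finset.sum_boole]
    obtain ⟨c, hc⟩ := this
    rw [hc]
    rcases le_or_gt c 1 with h | h
    · interval_cases c <;> norm_num
    · have : (2 : ℝ) ≤ c := by exact_mod_cast h
      nlinarith
  calc ∑ x ∈ U, t x - (1/2) * ∑ x ∈ U, (t x ^ 2 - t x)
      = ∑ x ∈ U, (t x - (1/2) * (t x ^ 2 - t x)) := by
        simp only [mul_sub, Finset.sum_sub_distrib, Finset.mul_sum]
    _ ≤ ∑ x ∈ U, 1 := Finset.sum_le_sum hpoint
    _ = U.card := by simp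

lemma mem_event (n k m : ℕ) [NeZero n] [NeZero k] (hkn : k ∣ n)
    (a : ZMod k) (j : Fin m → ZMod n) (hj : ∀ i, ((((j i).val : ℕ) : ZMod k) ≠ a)) :
    ∃ x : ZMod n → ℂ, x ≠ 0 ∧ norm0 x ≤ k ∧ (partialFourier n m j).mulVec x = 0 := by
  classical
  have hk : 0 < k := Nat.pos_of_ne_zero (NeZero.ne k)
  have hn : 0 < n := Nat.pos_of_ne_zero (NeZero.ne n)
  set d : ℕ := n / k with hd
  have hdk : d * k = n := Nat.div_mul_cancel hkn
  have hd0 : 0 < d := Nat.div_pos (Nat.le_of_dvd hn hkn) hk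
  set x : ZMod n → ℂ := fun ℓ =>
    if d ∣ ℓ.val then Complex.exp (2 * (Real.pi : ℂ) * Complex.I * (a.val : ℂ) * (ℓ.val : ℂ) / (n : ℂ)) else 0
    with hxdef
  refine ⟨x, ?_, ?_, ?_⟩
  · -- x ≠ 0
    intro h
    have h0 : x 0 = 0 := by rw [h]; rfl
    rw [hxdef] at h0
    simp only [ZMod.val_zero, Nat.dvd_zero, if_true, Nat.cast_zero, mul_zero, zero_div,
      Complex.exp_zero] at h0
    exact one_ne_zero h0
  · -- norm0 ≤ k
    have hvk : ∀ p : ZMod n, p.val / d < k := by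
      intro p
      have h1 := ZMod.val_lt p
      have h2 : p.val < d * k := by omega
      exact Nat.div_lt_of_lt_mul h2
    have hinj : Function.Injective (fun (p : {i // x i ≠ 0}) =>
        (⟨p.1.val / d, hvk p.1⟩ : Fin k)) := by
      rintro ⟨p, hp⟩ ⟨q, hq⟩ he
      have hdp : d ∣ p.val := by
        by_contra hc; exact hp (by rw [hxdef]; simp [hc])
      have hdq : d ∣ q.val := by
        by_contra hc; exact hq (by rw [hxdef]; simp [hc])
      simp only [Fin.mk.injEq, Subtype.mk.injEq] at he ⊢
      have : p.val = q.val := by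
        obtain ⟨u, hu⟩ := hdp; obtain ⟨v, hv⟩ := hdq
        rw [hu, hv] at he ⊢
        rw [Nat.mul_div_cancel_left u hd0, Nat.mul_div_cancel_left v hd0] at he
        rw [he]
      exact ZMod.val_injective n this
    calc norm0 x ≤ Nat.card (Fin k) := Nat.card_le_card_of_injective _ hinj
    _ = k := by simp
  · -- mulVec = 0
    funext i
    show ∑ ℓ : ZMod n, partialFourier n m j i ℓ * x ℓ = 0
    have hnC : (n : ℂ) ≠ 0 := Nat.cast_ne_zero.mpr hn.ne'
    set w : ℂ := (a.val : ℂ) - (((j i).val : ℕ) : ℂ) with hw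
    set z : ℂ := Complex.exp (2 * (Real.pi : ℂ) * Complex.I * w * (d : ℂ) / (n : ℂ)) with hz
    have hval : ∀ t, t < k → (((t * d : ℕ) : ZMod n)).val = t * d := by
      intro t ht
      apply ZMod.val_cast_of_lt
      calc t * d < k * d := by exact (Nat.mul_lt_mul_right hd0).mpr ht
      _ = n := by rw [mul_comm]; exact hdk
    -- restrict sum to support
    have h1 : ∑ ℓ : ZMod n, partialFourier n m j i ℓ * x ℓ
        = ∑ ℓ ∈ Finset.univ.filter (fun ℓ : ZMod n => d ∣ ℓ.val),
            partialFourier n m j i ℓ * x ℓ := by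
      rw [Finset.sum_filter_of_ne]
      intro ℓ _ hne
      by_contra hc
      apply hne
      rw [hxdef]; simp only [hc, if_false, mul_zero]
    have himg : Finset.univ.filter (fun ℓ : ZMod n => d ∣ ℓ.val)
        = (Finset.range k).image (fun t => ((t * d : ℕ) : ZMod n)) := by
      ext ℓ
      simp only [mem_filter, mem_univ, true_and, mem_image, mem_range]
      constructor
      · rintro ⟨u, hu⟩
        have hul : u < k := by
          have hv := ZMod.val_lt ℓ
          by_contra hc
          push_neg at hc
          have h3 : d * k ≤ d * u := Nat.mul_le_mul_left d hc
          rw [hdk] at h3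
          rw [hu] at hv
          omega
        refine ⟨u, hul, ?_⟩
        rw [mul_comm, ← hu, ZMod.natCast_val, ZMod.cast_id]
      · rintro ⟨t, ht, rfl⟩
        rw [hval t ht]
        exact ⟨t, mul_comm t d⟩
    have hinj2 : ∀ t ∈ Finset.range k, ∀ t' ∈ Finset.range k,
        ((t * d : ℕ) : ZMod n) = ((t' * d : ℕ) : ZMod n) → t = t' := by
      intro t ht t' ht' he
      rw [mem_range] at ht ht'
      have := congrArg ZMod.val he
      rw [hval t ht, hval t' ht'] at this
      exact Nat.eq_of_mul_eq_mul_right hd0 this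
    rw [h1, himg, Finset.sum_image hinj2]
    -- each term is (1/√n) * z^t
    have hterm : ∀ t ∈ Finset.range k,
        partialFourier n m j i ((t * d : ℕ) : ZMod n) * x ((t * d : ℕ) : ZMod n)
        = ((1 / Real.sqrt n : ℝ) : ℂ) * z ^ t := by
      intro t ht
      rw [mem_range] at ht
      have hdvd : d ∣ (((t * d : ℕ) : ZMod n)).val := by
        rw [hval t ht]; exact ⟨t, mul_comm t d⟩
      rw [hxdef]
      simp only [partialFourier, Matrix.of_apply, hdvd, if_true, hval t ht]
      rw [if_pos (dvd_mul_left d t), mul_assoc, ← Complex.exp_add]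
      congr 1
      rw [hz, ← Complex.exp_nat_mul]
      congr 1
      rw [hw]
      push_cast
      field_simp
      ring
    rw [Finset.sum_congr rfl hterm, ← Finset.mul_sum]
    have hzk : z ^ k = 1 := by
      rw [hz, ← Complex.exp_nat_mul]
      have hkd : (k : ℂ) * (d : ℂ) = (n : ℂ) := by
        rw [← Nat.cast_mul]
        congr 1
        rw [mul_comm]; exact hdk
      have hwc : (((a.val : ℤ) - ((j i).val : ℤ) : ℤ) : ℂ) = w := by
        rw [hw]; push_cast; ring
      have harg : (k : ℂ) * (2 * (Real.pi : ℂ) * Complex.I * w * (d : ℂ) / (n : ℂ))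
          = (((a.val : ℤ) - ((j i).val : ℤ) : ℤ) : ℂ) * (2 * (Real.pi : ℂ) * Complex.I) := by
        rw [hwc]
        rw [mul_div_assoc', div_eq_iff hnC]
        linear_combination (2 * (Real.pi : ℂ) * Complex.I * w) * hkd
      rw [harg]
      exact Complex.exp_int_mul_two_pi_mul_I _
    have hz1 : z ≠ 1 := by
      intro hc
      rw [hz, Complex.exp_eq_one_iff] at hc
      obtain ⟨q, hq⟩ := hc
      have h2pi : (2 * (Real.pi : ℂ) * Complex.I) ≠ 0 := by
        simp [Real.pi_ne_zero, Complex.I_ne_zero]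
      have hkd : (k : ℂ) * (d : ℂ) = (n : ℂ) := by
        rw [← Nat.cast_mul]
        congr 1
        rw [mul_comm]; exact hdk
      have hdC : (d : ℂ) ≠ 0 := Nat.cast_ne_zero.mpr hd0.ne'
      field_simp at hq
      have hwd : w * (d : ℂ) = (q : ℂ) * (n : ℂ) := by
        apply mul_left_cancel₀ h2pi
        linear_combination (2 * (Real.pi : ℂ) * Complex.I) * hq
      have hwqk : w = (q : ℂ) * (k : ℂ) := by
        apply mul_right_cancel₀ hdC
        rw [hwd, ← hkd]; ring
      have hint : (a.val : ℤ) - ((j i).val : ℤ) = q * k := by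
        have : (((a.val : ℤ) - ((j i).val : ℤ) : ℤ) : ℂ) = ((q * (k : ℤ) : ℤ) : ℂ) := by
          push_cast
          rw [← hw]
          rw [hwqk]
        exact_mod_cast this
      apply hj i
      have hmodeq : (j i).val ≡ a.val [MOD k] := by
        rw [Nat.modEq_iff_dvd]
        exact ⟨q, by push_cast; linarith [hint]⟩
      calc (((j i).val : ℕ) : ZMod k) = ((a.val : ℕ) : ZMod k) :=
        (ZMod.natCast_eq_natCast_iff _ _ _).mpr hmodeq
      _ = a := by rw [ZMod.natCast_val, ZMod.cast_id]
    calc ((1 / Real.sqrt n : ℝ) : ℂ) * ∑ t ∈ Finset.range k, z ^ t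
        = ((1 / Real.sqrt n : ℝ) : ℂ) * ((z ^ k - 1) / (z - 1)) := by rw [geom_sum_eq hz1]
      _ = 0 := by rw [hzk, sub_self, zero_div, mul_zero]

/-- Bonferroni lower bound: if `k ∣ n`, the probability that the nullspace of a random
`m × n` partial Fourier matrix (rows drawn independently and uniformly) contains a
nonzero `k`-sparse vector is at least `k(1 − 1/k)^m − (k(k−1)/2)(1 − 2/k)^m`. -/
theorem partial_fourier_nullspace_sparse_vector_lower_bound
    (n k m : ℕ) [NeZero n] (hn : 0 < n) (hk : 0 < k) (hm : 0 < m) (hkn : k ∣ n) :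
    ((Nat.card {j : Fin m → ZMod n //
        ∃ x : ZMod n → ℂ, x ≠ 0 ∧ norm0 x ≤ k ∧ (partialFourier n m j).mulVec x = 0} : ℝ)
      / (n : ℝ) ^ m)
      ≥ k * (1 - 1 / (k : ℝ)) ^ m - ((k : ℝ) * (k - 1) / 2) * (1 - 2 / (k : ℝ)) ^ m := by
  classical
  haveI : NeZero k := ⟨hk.ne'⟩
  set P : (Fin m → ZMod n) → Prop := fun j =>
    ∃ x : ZMod n → ℂ, x ≠ 0 ∧ norm0 x ≤ k ∧ (partialFourier n m j).mulVec x = 0 with hP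
  set T : Finset (Fin m → ZMod n) := Finset.univ.filter P with hT
  have hNatCard : (Nat.card {j : Fin m → ZMod n // P j} : ℝ) = T.card := by
    rw [Nat.card_eq_fintype_card, Fintype.card_subtype]
  rw [ge_iff_le, hNatCard]
  -- the bad-residue sets
  set c : ℕ := n / k with hc
  have hck : c * k = n := Nat.div_mul_cancel hkn
  have hc0 : 0 < c := Nat.div_pos (Nat.le_of_dvd hn hkn) hk
  set s : ZMod k → Finset (ZMod n) :=
    fun a => Finset.univ.filter (fun x : ZMod n => ((x.val : ZMod k) ≠ a)) with hs
  set A : ZMod k → Finset (Fin m → ZMod n) :=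
    fun a => Finset.univ.filter (fun j => ∀ i, (((j i).val : ZMod k) ≠ a)) with hA
  have hscard : ∀ a, (s a).card = n - c := by
    intro a
    have h := Finset.card_filter_add_card_filter_not
      (s := (Finset.univ : Finset (ZMod n))) (fun x : ZMod n => ((x.val : ZMod k) = a))
    rw [fiber_card n k hkn a, Finset.card_univ, ZMod.card n] at h
    have he : (Finset.univ.filter (fun x : ZMod n => ¬ ((x.val : ZMod k) = a))) = s a := rfl
    rw [he] at h
    have hcle : c ≤ n := Nat.div_le_self n k
    omega
  have hscard2 : ∀ a b, a ≠ b → (s a ∩ s b).card = n - 2 * c := by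
    intro a b hab
    have hab' : s a ∩ s b =
        Finset.univ.filter (fun x : ZMod n => ¬(((x.val : ZMod k) = a) ∨ ((x.val : ZMod k) = b))) := by
      ext x
      simp only [hs, Finset.mem_inter, Finset.mem_filter, Finset.mem_univ, true_and]
      tauto
    have hor : (Finset.univ.filter
        (fun x : ZMod n => (((x.val : ZMod k) = a) ∨ ((x.val : ZMod k) = b)))).card = 2 * c := by
      rw [Finset.filter_or, Finset.card_union_of_disjoint]
      · rw [fiber_card n k hkn a, fiber_card n k hkn b]; omega
      · rw [Finset.disjoint_filter]
        intro x _ hxa hxb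
        exact hab (hxa ▸ hxb ▸ rfl)
    have h := Finset.card_filter_add_card_filter_not
      (s := (Finset.univ : Finset (ZMod n)))
      (fun x : ZMod n => (((x.val : ZMod k) = a) ∨ ((x.val : ZMod k) = b)))
    rw [hor, Finset.card_univ, ZMod.card n] at h
    rw [hab']
    have h2c : 2 * c ≤ n := by
      rcases Nat.lt_or_ge k 2 with hk2 | hk2
      · exfalso
        have hk1 : k = 1 := by omega
        subst hk1
        exact hab (Subsingleton.elim a b)
      · calc 2 * c ≤ k * c := Nat.mul_le_mul_right c hk2
        _ = n := by rw [mul_comm]; exact hck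
    omega
  have hAcard : ∀ a, (A a).card = (n - c) ^ m := by
    intro a
    have : A a = Fintype.piFinset (fun _ : Fin m => s a) := by
      ext j
      simp [hA, hs, Fintype.mem_piFinset]
    rw [this, Fintype.card_piFinset_const, hscard]
  have hAcard2 : ∀ a b, a ≠ b → (A a ∩ A b).card = (n - 2 * c) ^ m := by
    intro a b hab
    have : A a ∩ A b = Fintype.piFinset (fun _ : Fin m => s a ∩ s b) := by
      ext j
      simp only [hA, hs, Finset.mem_inter, Finset.mem_filter, Finset.mem_univ, true_and,
        Fintype.mem_piFinset]
      constructor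
      · rintro ⟨h1, h2⟩ i
        exact ⟨h1 i, h2 i⟩
      · intro h
        exact ⟨fun i => (h i).1, fun i => (h i).2⟩
    rw [this, Fintype.card_piFinset_const, hscard2 a b hab]
  have hU : ∀ a, A a ⊆ T := by
    intro a j hj
    rw [hT, Finset.mem_filter]
    refine ⟨Finset.mem_univ _, ?_⟩
    rw [hA, Finset.mem_filter] at hj
    exact mem_event n k m hkn a j hj.2
  have hbon := bonferroni A T hU
  have hsum1 : (∑ a : ZMod k, ((A a).card : ℝ)) = k * ((n - c : ℕ) ^ m : ℕ) := by
    rw [Finset.sum_congr rfl (fun a _ => by rw [hAcard a])]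
    rw [Finset.sum_const, Finset.card_univ, ZMod.card k, nsmul_eq_mul]
  have hsum2 : (∑ p ∈ (Finset.univ : Finset (ZMod k)).offDiag, ((A p.1 ∩ A p.2).card : ℝ))
      = (k * k - k : ℕ) * ((n - 2 * c : ℕ) ^ m : ℕ) := by
    rw [Finset.sum_congr rfl (fun p hp => by
      rw [hAcard2 p.1 p.2 (Finset.mem_offDiag.mp hp).2.2])]
    rw [Finset.sum_const, Finset.offDiag_card, Finset.card_univ, ZMod.card k, nsmul_eq_mul]
  rw [hsum1, hsum2] at hbon
  -- now pure real arithmetic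
  have hnm : (0 : ℝ) < (n : ℝ) ^ m := by positivity
  have hTnn : (0 : ℝ) ≤ (T.card : ℝ) := Nat.cast_nonneg _
  by_cases hk1 : k = 1
  · subst hk1
    norm_num [zero_pow hm.ne']
    positivity
  · have hk2 : 2 ≤ k := by omega
    have hcle : c ≤ n := Nat.div_le_self n k
    have h2c : 2 * c ≤ n := by
      calc 2 * c ≤ k * c := Nat.mul_le_mul_right c hk2
      _ = n := by rw [mul_comm]; exact hck
    have hkk : k ≤ k * k := Nat.le_mul_of_pos_left k hk
    have hkR : ((k : ℝ)) ≠ 0 := Nat.cast_ne_zero.mpr hk.ne'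
    have hnR : ((n : ℝ)) ≠ 0 := Nat.cast_ne_zero.mpr hn.ne'
    have hckR : (c : ℝ) * (k : ℝ) = (n : ℝ) := by exact_mod_cast hck
    have e1 : 1 - 1 / (k : ℝ) = ((n : ℝ) - c) / n := by
      field_simp
      linear_combination hckR
    have e2 : 1 - 2 / (k : ℝ) = ((n : ℝ) - 2 * c) / n := by
      field_simp
      linear_combination 2 * hckR
    rw [e1, e2, div_pow, div_pow]
    have hre : (k : ℝ) * (((n : ℝ) - c) ^ m / (n : ℝ) ^ m)
        - ((k : ℝ) * ((k : ℝ) - 1) / 2) * (((n : ℝ) - 2 * c) ^ m / (n : ℝ) ^ m)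
        = ((k : ℝ) * ((n : ℝ) - c) ^ m
            - ((k : ℝ) * ((k : ℝ) - 1) / 2) * ((n : ℝ) - 2 * c) ^ m) / (n : ℝ) ^ m := by
      ring
    rw [hre, div_le_div_iff₀ hnm hnm]
    have hb2 : (k : ℝ) * ((n : ℝ) - c) ^ m
        - ((k : ℝ) * ((k : ℝ) - 1) / 2) * ((n : ℝ) - 2 * c) ^ m ≤ (T.card : ℝ) := by
      have hbon' := hbon
      push_cast [Nat.cast_sub hcle, Nat.cast_sub h2c, Nat.cast_sub hkk] at hbon'
      calc (k : ℝ) * ((n : ℝ) - c) ^ m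
          - ((k : ℝ) * ((k : ℝ) - 1) / 2) * ((n : ℝ) - 2 * c) ^ m
          = (k : ℝ) * ((n : ℝ) - c) ^ m
            - 1 / 2 * (((k : ℝ) * (k : ℝ) - (k : ℝ)) * ((n : ℝ) - 2 * c) ^ m) := by ring
        _ ≤ (T.card : ℝ) := hbon'
    nlinarith [hb2, hnm]
end

section
/- Let n, k be positive integers and let F be the unitary discrete Fourier transform on ℂ^(ZMod n). Suppose x ∈ ℂ^(ZMod n) satisfies ‖x‖₀ ≤ k and ‖x‖₂² = n/k. Then (1/n)·Σ_{j∈ZMod n} |(Fx)[j]| ≥ 1/k and (1/n)·Σ_{j∈ZMod n} |(Fx)[j]|² = 1/k; equivalently, if j is drawn uniformly from ZMod n and Y := |(Fx)[j]|, then E[Y] ≥ 1/k and E[Y²] = 1/k. -/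
open scoped BigOperators

open Finset AddChar in
lemma exp_eq_stdAddChar (n : ℕ) [NeZero n] (j k : ZMod n) :
    Complex.exp (-(2 * (Real.pi : ℂ) * Complex.I * (j.val : ℂ) * (k.val : ℂ)) / (n : ℂ)) =
      ZMod.stdAddChar (-(j * k)) := by
  have h : (-(j * k) : ZMod n) = ((-(j.val * k.val : ℤ) : ℤ) : ZMod n) := by
    push_cast
    rw [ZMod.natCast_val, ZMod.natCast_val, ZMod.cast_id, ZMod.cast_id]
  rw [h, ZMod.stdAddChar_coe]
  push_cast
  ring_nf

open Finset AddChar in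
lemma dft_eq (n : ℕ) [NeZero n] (x : ZMod n → ℂ) (k : ZMod n) :
    dft n x k = (1 / Real.sqrt n : ℝ) * ZMod.dft x k := by
  rw [dft, ZMod.dft_apply]
  congr 1
  refine Finset.sum_congr rfl fun j _ => ?_
  rw [exp_eq_stdAddChar, smul_eq_mul, mul_comm]

open Finset AddChar in
lemma sum_stdAddChar_mul (n : ℕ) [NeZero n] (t : ZMod n) :
    ∑ i : ZMod n, ZMod.stdAddChar (t * i) = if t = 0 then (n : ℂ) else 0 := by
  split_ifs with h
  · simp [h, ZMod.card]
  · have : ∑ i : ZMod n, ZMod.stdAddChar (t * i)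
        = ∑ i : ZMod n, (mulShift ZMod.stdAddChar t) i := by
      simp [mulShift_apply]
    rw [this]
    exact sum_eq_zero_of_ne_one (ZMod.isPrimitive_stdAddChar n h)

open Finset AddChar in
lemma conj_stdAddChar (n : ℕ) [NeZero n] (a : ZMod n) :
    (starRingEnd ℂ) (ZMod.stdAddChar a) = ZMod.stdAddChar (-a) := by
  have h1 : ZMod.stdAddChar a * ZMod.stdAddChar (-a) = 1 := by
    rw [← map_add_eq_mul, add_neg_cancel, map_zero_eq_one]
  have h2 : ‖(ZMod.stdAddChar (a := a))‖ = 1 := by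
    rw [ZMod.stdAddChar_apply]
    exact Circle.norm_coe _
  have h3 : (starRingEnd ℂ) (ZMod.stdAddChar a) * ZMod.stdAddChar a = 1 := by
    rw [mul_comm, Complex.mul_conj, ← Complex.sq_norm, h2]
    norm_num
  have hne : (ZMod.stdAddChar (a := a)) ≠ 0 := by
    intro h; rw [h] at h2; simp at h2
  rw [← h1, mul_comm (ZMod.stdAddChar a)] at h3
  exact mul_right_cancel₀ hne h3

open Finset AddChar in
/-- Parseval / Plancherel for the unnormalized `ZMod.dft`. -/
lemma parseval_s15 (n : ℕ) [NeZero n] (x : ZMod n → ℂ) :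
    ∑ k : ZMod n, ‖ZMod.dft x k‖ ^ 2 = n * ∑ j : ZMod n, ‖x j‖ ^ 2 := by
  have key : ∑ k : ZMod n, ((Complex.normSq (ZMod.dft x k) : ℂ))
      = (n : ℂ) * ∑ j : ZMod n, (Complex.normSq (x j) : ℂ) := by
    have expand : ∀ k : ZMod n, ((Complex.normSq (ZMod.dft x k) : ℂ))
        = ∑ j : ZMod n, ∑ j' : ZMod n,
            x j * (starRingEnd ℂ) (x j') * ZMod.stdAddChar ((j' - j) * k) := by
      intro k
      rw [← Complex.mul_conj, ZMod.dft_apply]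
      rw [map_sum, Finset.sum_mul_sum]
      refine Finset.sum_congr rfl fun j _ => Finset.sum_congr rfl fun j' _ => ?_
      simp only [smul_eq_mul, map_mul, conj_stdAddChar, neg_neg]
      rw [show ZMod.stdAddChar (-(j * k)) * x j * (ZMod.stdAddChar (j' * k) * (starRingEnd ℂ) (x j'))
          = x j * (starRingEnd ℂ) (x j') * (ZMod.stdAddChar (-(j * k)) * ZMod.stdAddChar (j' * k)) by ring,
        ← map_add_eq_mul, show -(j * k) + j' * k = (j' - j) * k by ring]
    simp only [expand]
    have swap : (∑ k : ZMod n, ∑ j : ZMod n, ∑ j' : ZMod n,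
        x j * (starRingEnd ℂ) (x j') * ZMod.stdAddChar ((j' - j) * k))
        = ∑ j : ZMod n, ∑ j' : ZMod n, ∑ k : ZMod n,
        x j * (starRingEnd ℂ) (x j') * ZMod.stdAddChar ((j' - j) * k) := by
      rw [Finset.sum_comm]
      exact Finset.sum_congr rfl fun j _ => Finset.sum_comm
    rw [swap]
    have inner : ∀ j j' : ZMod n, (∑ k : ZMod n,
        x j * (starRingEnd ℂ) (x j') * ZMod.stdAddChar ((j' - j) * k))
        = if j' = j then (n : ℂ) * (x j * (starRingEnd ℂ) (x j')) else 0 := by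
      intro j j'
      rw [← Finset.mul_sum, sum_stdAddChar_mul]
      simp only [sub_eq_zero]
      split_ifs with h
      · ring
      · ring
    simp only [inner]
    rw [Finset.mul_sum]
    refine Finset.sum_congr rfl fun j _ => ?_
    rw [Finset.sum_ite_eq' Finset.univ j (fun j' => (n : ℂ) * (x j * (starRingEnd ℂ) (x j')))]
    simp [Complex.mul_conj]
  simp only [Complex.sq_norm]
  exact_mod_cast key

/-- Moment bounds for uniformly sampled Fourier coefficients of a sparse vector:
if `‖x‖₀ ≤ k` and `‖x‖₂² = n/k`, then the first absolute moment of `|(Fx)[j]|` over a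
uniform `j` is at least `1/k` and the second moment equals `1/k`. -/
theorem sparse_fourier_moments (n k : ℕ) [NeZero n] (hk : 0 < k)
    (x : ZMod n → ℂ) (h0 : norm0 x ≤ k) (h2 : norm2sq x = (n : ℝ) / k) :
    (1 / (n : ℝ)) * ∑ j : ZMod n, ‖dft n x j‖ ≥ 1 / k ∧
    (1 / (n : ℝ)) * ∑ j : ZMod n, ‖dft n x j‖ ^ 2 = 1 / k := by
  have hn : (0 : ℝ) < n := Nat.cast_pos.mpr (Nat.pos_of_ne_zero (NeZero.ne n))
  have hsqn : (0 : ℝ) < Real.sqrt n := Real.sqrt_pos.mpr hn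
  have habs : ∀ j : ZMod n, ‖dft n x j‖
      = (1 / Real.sqrt n) * ‖ZMod.dft x j‖ := by
    intro j
    rw [dft_eq, norm_mul, Complex.norm_real, Real.norm_eq_abs, abs_of_nonneg (by positivity)]
  -- second moment
  have hsum2 : ∑ j : ZMod n, ‖dft n x j‖ ^ 2 = (n : ℝ) / k := by
    have : ∑ j : ZMod n, ‖dft n x j‖ ^ 2
        = (1 / Real.sqrt n) ^ 2 * ∑ j : ZMod n, ‖ZMod.dft x j‖ ^ 2 := by
      rw [Finset.mul_sum]
      exact Finset.sum_congr rfl fun j _ => by rw [habs]; ring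
    rw [this, parseval_s15, norm2sq] at *
    rw [h2, div_pow, one_pow, Real.sq_sqrt hn.le]
    field_simp
  have hsecond : (1 / (n : ℝ)) * ∑ j : ZMod n, ‖dft n x j‖ ^ 2 = 1 / k := by
    rw [hsum2]; field_simp
  refine ⟨?_, hsecond⟩
  -- Cauchy–Schwarz: ℓ¹ norm bound
  classical
  set s : Finset (ZMod n) := Finset.univ.filter (fun i => x i ≠ 0) with hs
  have hcard : s.card ≤ k := by
    have : norm0 x = s.card := by
      rw [norm0, Nat.card_eq_fintype_card, Fintype.card_subtype]
    omega
  have hsum_eq : ∑ i ∈ s, ‖x i‖ ^ 2 = norm2sq x := by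
    rw [norm2sq]
    refine Finset.sum_subset (Finset.subset_univ s) fun i _ hi => ?_
    simp only [hs, Finset.mem_filter, Finset.mem_univ, true_and, not_not] at hi
    simp [hi]
  have hl1 : ∑ i : ZMod n, ‖x i‖ ≤ Real.sqrt n := by
    have h1 : ∑ i : ZMod n, ‖x i‖ = ∑ i ∈ s, ‖x i‖ := by
      symm
      refine Finset.sum_subset (Finset.subset_univ s) fun i _ hi => ?_
      simp only [hs, Finset.mem_filter, Finset.mem_univ, true_and, not_not] at hi
      simp [hi]
    have hcs' : (∑ i ∈ s, ‖x i‖) ^ 2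
        ≤ (s.card : ℝ) * ∑ i ∈ s, ‖x i‖ ^ 2 := by
      have := Finset.sum_mul_sq_le_sq_mul_sq s (fun _ => 1) (fun i => ‖x i‖)
      simpa using this
    have hb : (∑ i ∈ s, ‖x i‖) ^ 2 ≤ (n : ℝ) := by
      calc (∑ i ∈ s, ‖x i‖) ^ 2
          ≤ (s.card : ℝ) * ∑ i ∈ s, ‖x i‖ ^ 2 := hcs'
        _ ≤ (k : ℝ) * ((n : ℝ) / k) := by
            rw [hsum_eq, h2]
            apply mul_le_mul_of_nonneg_right (by exact_mod_cast hcard)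
            positivity
        _ = (n : ℝ) := by field_simp
    rw [h1]
    have h0 : (0 : ℝ) ≤ ∑ i ∈ s, ‖x i‖ :=
      Finset.sum_nonneg fun i _ => norm_nonneg _
    nlinarith [Real.sq_sqrt hn.le, Real.sqrt_nonneg (n : ℝ)]
  -- pointwise bound |F x j| ≤ 1
  have hpt : ∀ j : ZMod n, ‖dft n x j‖ ≤ 1 := by
    intro j
    rw [habs]
    have hb : ‖ZMod.dft x j‖ ≤ ∑ i : ZMod n, ‖x i‖ := by
      rw [ZMod.dft_apply]
      refine (norm_sum_le _ _).trans ?_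
      refine Finset.sum_le_sum fun i _ => ?_
      rw [smul_eq_mul, norm_mul, ZMod.stdAddChar_apply, Circle.norm_coe, one_mul]
    calc (1 / Real.sqrt n) * ‖ZMod.dft x j‖
        ≤ (1 / Real.sqrt n) * Real.sqrt n :=
          mul_le_mul_of_nonneg_left (hb.trans hl1) (by positivity)
      _ = 1 := by field_simp
  -- first moment
  have hge : ∑ j : ZMod n, ‖dft n x j‖ ^ 2
      ≤ ∑ j : ZMod n, ‖dft n x j‖ := by
    refine Finset.sum_le_sum fun j _ => ?_
    have h0 := norm_nonneg (dft n x j)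
    nlinarith [hpt j]
  rw [ge_iff_le, ← hsecond]
  apply mul_le_mul_of_nonneg_left hge (by positivity)
end

section
/- Let x ∈ ℂ^N be nonzero and suppose equality holds in Hölder's inequality in the form ‖x‖₁·‖x‖_∞ = ‖x‖₂², where ‖x‖_∞ = maxᵢ|xᵢ|. Then every nonzero entry of x has modulus equal to ‖x‖_∞, and consequently ns(x) = ‖x‖₀. -/
open scoped BigOperators

/-- If equality holds in Hölder's inequality `‖x‖₁·‖x‖_∞ = ‖x‖₂²` for a nonzero `x`,
then all nonzero entries of `x` have modulus `‖x‖_∞`, and `ns(x) = ‖x‖₀`. -/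
theorem holder_equality_flat {N : Type*} [Fintype N] [Nonempty N] (x : N → ℂ) (hx : x ≠ 0)
    (heq : norm1 x * (Finset.univ.sup' Finset.univ_nonempty fun i => ‖x i‖)
      = norm2sq x) :
    (∀ i, x i ≠ 0 →
      ‖x i‖ = Finset.univ.sup' Finset.univ_nonempty fun i => ‖x i‖) ∧
    ns x = (norm0 x : ℝ) := by
  classical
  set M : ℝ := Finset.univ.sup' Finset.univ_nonempty fun i => ‖x i‖ with hM
  obtain ⟨i0, hi0⟩ : ∃ i, x i ≠ 0 := by
    by_contra h; push_neg at h; exact hx (funext h)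
  have hMpos : 0 < M := lt_of_lt_of_le (by simpa using hi0)
    (Finset.le_sup' (fun i => ‖x i‖) (Finset.mem_univ i0))
  have hle : ∀ i ∈ (Finset.univ : Finset N),
      ‖x i‖ ^ 2 ≤ ‖x i‖ * M := by
    intro i _
    have h1 : ‖x i‖ ≤ M :=
      Finset.le_sup' (fun i => ‖x i‖) (Finset.mem_univ i)
    have h0 : (0:ℝ) ≤ ‖x i‖ := norm_nonneg _
    calc ‖x i‖ ^ 2 = ‖x i‖ * ‖x i‖ := sq (‖x i‖)
      _ ≤ ‖x i‖ * M := mul_le_mul_of_nonneg_left h1 h0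
  have hsum : ∑ i, ‖x i‖ * M = ∑ i, ‖x i‖ ^ 2 := by
    rw [← Finset.sum_mul]; exact heq
  have hpt : ∀ i ∈ (Finset.univ : Finset N),
      ‖x i‖ * M = ‖x i‖ ^ 2 :=
    fun i hi => ((Finset.sum_eq_sum_iff_of_le hle).mp hsum.symm i hi).symm
  have hflat : ∀ i, x i ≠ 0 → ‖x i‖ = M := by
    intro i hi
    have h := hpt i (Finset.mem_univ i)
    have habs : ‖x i‖ ≠ 0 := by simpa using hi
    have : ‖x i‖ * M = ‖x i‖ * ‖x i‖ := by
      rw [h, sq]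
    exact (mul_left_cancel₀ habs this).symm
  refine ⟨hflat, ?_⟩
  set S : Finset N := Finset.univ.filter (fun i => x i ≠ 0) with hS
  have hcard : (norm0 x : ℝ) = (S.card : ℝ) := by
    unfold norm0
    rw [Nat.card_eq_fintype_card, Fintype.card_subtype]
  have hn1 : norm1 x = S.card * M := by
    unfold norm1
    rw [← Finset.sum_subset (Finset.filter_subset (fun i => x i ≠ 0) Finset.univ)
      (fun i _ hi => by simp only [Finset.mem_filter, Finset.mem_univ, true_and,
        not_not] at hi; simp [hi])]
    rw [Finset.sum_congr rfl (fun i hi => hflat i (by simpa [hS] using hi))]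
    simp [mul_comm, hS]
  have hn2 : norm2sq x = S.card * M ^ 2 := by
    unfold norm2sq
    rw [← Finset.sum_subset (Finset.filter_subset (fun i => x i ≠ 0) Finset.univ)
      (fun i _ hi => by simp only [Finset.mem_filter, Finset.mem_univ, true_and,
        not_not] at hi; simp [hi])]
    rw [Finset.sum_congr rfl (fun i hi => by
      rw [hflat i (by simpa [hS] using hi)])]
    simp [mul_comm, hS]
  have hScard : (S.card : ℝ) ≠ 0 := by
    have : i0 ∈ S := by simp [hS, hi0]
    have : 0 < S.card := Finset.card_pos.mpr ⟨i0, this⟩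
    exact_mod_cast this.ne'
  rw [ns, hn1, hn2, hcard]
  field_simp
end
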